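/- arXiv:2411.14138 — 3 statements merged into one kernel-verified Lean document; each statement's English description precedes it below -/
import Mathlib

section
/- Let F be a strictly 1-balanced graph with 1-density d_1(F) = e(F)/(v(F)−1). Then every subgraph S of F with at least one edge and e(S) < e(F) satisfies e(S) < d_1(F) · (v(S) − c(S)), where v(S) and c(S) denote the number of vertices and the number of connected components of S (isolated vertices counting as components). -/
open scoped Classical
open Filter Asymptotics

noncomputable section

/-! ### Basic graph quantities -/

/-- The number of edges of a simple graph. -/
def edgeCnt {V : Type*} (G : SimpleGraph V) : ℕ := G.edgeSet.ncard

/-- The 1-density `e(F)/(v(F)-1)` of a graph `F` on `r` vertices. -/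
def d1 {r : ℕ} (F : SimpleGraph (Fin r)) : ℝ := (edgeCnt F : ℝ) / ((r : ℝ) - 1)

/-- `F` is strictly 1-balanced: every proper subgraph `S` with at least 2 vertices and at
least one edge satisfies `d₁(S) < d₁(F)`. -/
def Strictly1Balanced {r : ℕ} (F : SimpleGraph (Fin r)) : Prop :=
  ∀ S : F.Subgraph, S ≠ ⊤ → 2 ≤ S.verts.ncard → 1 ≤ S.edgeSet.ncard →
    (S.edgeSet.ncard : ℝ) / ((S.verts.ncard : ℝ) - 1) < d1 F

/-- The number of automorphisms of `F`. -/
def autCard {r : ℕ} (F : SimpleGraph (Fin r)) : ℕ := Nat.card (F ≃g F)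

/-! ### Copies of `F` in a graph, `F`-factors, `F`-isolated vertices -/

/-- `φ` is a copy of `F` in `G` (an embedding of `F` as a not necessarily induced subgraph). -/
def IsCopyIn {r n : ℕ} (F : SimpleGraph (Fin r)) (G : SimpleGraph (Fin n))
    (φ : Fin r ↪ Fin n) : Prop :=
  ∀ u v, F.Adj u v → G.Adj (φ u) (φ v)

/-- `G` contains an `F`-factor: pairwise vertex-disjoint copies of `F` covering all vertices. -/
def HasFFactor {r n : ℕ} (F : SimpleGraph (Fin r)) (G : SimpleGraph (Fin n)) : Prop :=
  ∃ Φ : Finset (Fin r ↪ Fin n),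
    (∀ φ ∈ Φ, IsCopyIn F G φ) ∧
    (∀ φ ∈ Φ, ∀ ψ ∈ Φ, φ ≠ ψ → ∀ x : Fin n, ¬(x ∈ Set.range φ ∧ x ∈ Set.range ψ)) ∧
    (∀ x : Fin n, ∃ φ ∈ Φ, x ∈ Set.range φ)

/-- Vertex `x` is `F`-isolated in `G`: no copy of `F` in `G` contains `x`. -/
def FIsolated {r n : ℕ} (F : SimpleGraph (Fin r)) (G : SimpleGraph (Fin n)) (x : Fin n) : Prop :=
  ∀ φ : Fin r ↪ Fin n, IsCopyIn F G φ → x ∉ Set.range φ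

/-! ### The random graph `G(n,p)` -/

/-- Probability of the event `P` in the Erdős–Rényi random graph `G(n,p)`. -/
def gnpProb (n : ℕ) (p : ℝ) (P : SimpleGraph (Fin n) → Prop) : ℝ :=
  ∑ G : SimpleGraph (Fin n),
    if P G then p ^ edgeCnt G * (1 - p) ^ (n.choose 2 - edgeCnt G) else 0

/-- The sharp threshold `p* = ((aut F / r!) · ln n / C(n-1, r-1))^(1/e(F))`. -/
def pstar {r : ℕ} (F : SimpleGraph (Fin r)) (n : ℕ) : ℝ :=
  ((autCard F : ℝ) / (r.factorial : ℝ) * Real.log n / ((n - 1).choose (r - 1) : ℝ)) ^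
    ((1 : ℝ) / (edgeCnt F : ℝ))

/-! ### `F`-edges and `F`-graphs -/

/-- An `F`-edge: a pair (vertex set, edge set); the copies of `F` among these are singled out
by `FEdge.IsCopyOf`. -/
abbrev FEdge (V : Type*) := Finset V × Finset (Sym2 V)

/-- `h` is a copy of `F` with vertices in `V`. -/
def FEdge.IsCopyOf {r : ℕ} {V : Type*} (h : FEdge V) (F : SimpleGraph (Fin r)) : Prop :=
  ∃ φ : Fin r → V, Function.Injective φ ∧ (↑h.1 : Set V) = Set.range φ ∧
    (↑h.2 : Set (Sym2 V)) = Sym2.map φ '' F.edgeSet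

/-- An `F`-graph: a vertex set together with a set of `F`-edges. -/
abbrev FGraph (V : Type*) := Finset V × Finset (FEdge V)

/-- Well-formedness of an `F`-graph w.r.t. `F`: every `F`-edge is a copy of `F` with
vertices inside the vertex set. -/
def FGraph.Wf {r : ℕ} {V : Type*} (H : FGraph V) (F : SimpleGraph (Fin r)) : Prop :=
  ∀ h ∈ H.2, FEdge.IsCopyOf h F ∧ h.1 ⊆ H.1

/-- The edge set of the shadow graph of an `F`-graph. -/
def shadowEdges {V : Type*} [DecidableEq V] (H : FGraph V) : Finset (Sym2 V) :=
  H.2.sup Prod.snd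

/-- The shadow graph of an `F`-graph. -/
def shadow {V : Type*} [DecidableEq V] (H : FGraph V) : SimpleGraph V :=
  SimpleGraph.fromEdgeSet ↑(shadowEdges H)

/-- Number of connected components of the shadow graph of `H` (on the vertex set of `H`). -/
def compCount {V : Type*} [DecidableEq V] (H : FGraph V) : ℕ :=
  Nat.card ((shadow H).induce (↑H.1 : Set V)).ConnectedComponent

/-- An `F`-graph is connected if its shadow graph is. -/
def FGraphConnected {V : Type*} [DecidableEq V] (H : FGraph V) : Prop :=
  ((shadow H).induce (↑H.1 : Set V)).Connected

/-- The nullity `n(H) = (r-1)e(H) + c(H) - v(H)` of an `F`-graph. -/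
def nullity (r : ℕ) {V : Type*} [DecidableEq V] (H : FGraph V) : ℤ :=
  ((r : ℤ) - 1) * H.2.card + compCount H - H.1.card

/-- An avoidable configuration: a connected `F`-graph of nullity at least 2. -/
def Avoidable {r : ℕ} {V : Type*} [DecidableEq V] (F : SimpleGraph (Fin r))
    (H : FGraph V) : Prop :=
  FGraph.Wf H F ∧ FGraphConnected H ∧ 2 ≤ nullity r H

/-- The `F`-edge `h` is induced by the `F`-graph `H`: it is a copy of `F`, not an `F`-edge of
`H`, but all its edges lie in the shadow graph of `H`. -/
def InducedBy {r : ℕ} {V : Type*} [DecidableEq V] (F : SimpleGraph (Fin r)) (h : FEdge V)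
    (H : FGraph V) : Prop :=
  FEdge.IsCopyOf h F ∧ h ∉ H.2 ∧ h.2 ⊆ shadowEdges H

/-- `C` is a clean `F`-cycle of length `k`. -/
def IsCleanCycleOfLen {r : ℕ} {V : Type*} [DecidableEq V] (F : SimpleGraph (Fin r))
    (C : FGraph V) (k : ℕ) : Prop :=
  FGraph.Wf C F ∧ C.1 = C.2.sup Prod.fst ∧
  ((k = 2 ∧ ∃ h₁ h₂ : FEdge V, h₁ ≠ h₂ ∧ C.2 = {h₁, h₂} ∧ (h₁.1 ∩ h₂.1).card = 2) ∨
   (3 ≤ k ∧ ∃ h : Fin k → FEdge V, Function.Injective h ∧ C.2 = Finset.image h Finset.univ ∧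
     ∃ v : Fin k → V, Function.Injective v ∧
       (∀ i j : Fin k, ((i : ℕ) + 1) % k = (j : ℕ) → (h i).1 ∩ (h j).1 = {v i}) ∧
       (∀ i j : Fin k, i ≠ j → ((i : ℕ) + 1) % k ≠ (j : ℕ) → ((j : ℕ) + 1) % k ≠ (i : ℕ) →
         (h i).1 ∩ (h j).1 = ∅)))

/-- `C` is a clean `F`-cycle (of some length `k ≥ 2`). -/
def IsCleanCycle {r : ℕ} {V : Type*} [DecidableEq V] (F : SimpleGraph (Fin r))
    (C : FGraph V) : Prop :=
  ∃ k, IsCleanCycleOfLen F C k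

/-- `C` is a sparse clean `F`-cycle: a clean `F`-cycle of length 2 whose two overlap vertices
form an edge of both of its `F`-edges. -/
def IsSparse {r : ℕ} {V : Type*} [DecidableEq V] (F : SimpleGraph (Fin r))
    (C : FGraph V) : Prop :=
  IsCleanCycleOfLen F C 2 ∧ ∃ h₁ h₂ : FEdge V, h₁ ≠ h₂ ∧ C.2 = {h₁, h₂} ∧
    ∃ x y : V, x ≠ y ∧ h₁.1 ∩ h₂.1 = {x, y} ∧ s(x, y) ∈ h₁.2 ∧ s(x, y) ∈ h₂.2

/-! ### The random `F`-graph `H_F(n,π)` -/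

/-- All potential `F`-edges on the vertex set `Fin n`. -/
def allFEdges (r n : ℕ) (F : SimpleGraph (Fin r)) : Finset (FEdge (Fin n)) :=
  Finset.univ.filter fun h => FEdge.IsCopyOf h F

/-- Expectation of `X` under the random `F`-graph `H_F(n,π)`, whose `F`-edge set is a random
subset of `allFEdges r n F`, each `F`-edge present independently with probability `π`. -/
def hfExp (r n : ℕ) (F : SimpleGraph (Fin r)) (π : ℝ)
    (X : Finset (FEdge (Fin n)) → ℝ) : ℝ :=
  ∑ S ∈ (allFEdges r n F).powerset,
    π ^ S.card * (1 - π) ^ ((allFEdges r n F).card - S.card) * X S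

/-- Probability of `P` under the random `F`-graph `H_F(n,π)`. -/
def hfProb (r n : ℕ) (F : SimpleGraph (Fin r)) (π : ℝ)
    (P : Finset (FEdge (Fin n)) → Prop) : ℝ :=
  hfExp r n F π fun S => if P S then 1 else 0

/-! ### Maps, isomorphisms and copies of `F`-graphs -/

/-- Image of an `F`-edge under a vertex map. -/
def FEdge.map {V W : Type*} [DecidableEq W] (ψ : V → W) (h : FEdge V) : FEdge W :=
  (h.1.image ψ, h.2.image (Sym2.map ψ))

/-- Image of an `F`-graph under a vertex map. -/
def FGraph.map {V W : Type*} [DecidableEq V] [DecidableEq W] (ψ : V → W)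
    (H : FGraph V) : FGraph W :=
  (H.1.image ψ, H.2.image (FEdge.map ψ))

/-- `H` is isomorphic to `K` via a vertex bijection mapping `F`-edges to `F`-edges. -/
def FGraph.IsoTo {V W : Type*} [DecidableEq V] [DecidableEq W] (H : FGraph V)
    (K : FGraph W) : Prop :=
  ∃ ψ : V → W, Set.InjOn ψ ↑H.1 ∧ FGraph.map ψ H = K

/-- The number of copies of the `F`-graph `H` among a set `S` of `F`-edges on `Fin n`. -/
def copyCount {V : Type*} [DecidableEq V] (H : FGraph V) {n : ℕ}
    (S : Finset (FEdge (Fin n))) : ℕ :=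
  Nat.card {K : FGraph (Fin n) // K.2 ⊆ S ∧ FGraph.IsoTo H K}

/-- Union of two `F`-graphs. -/
def FGraph.union {V : Type*} [DecidableEq V] (H K : FGraph V) : FGraph V :=
  (H.1 ∪ K.1, H.2 ∪ K.2)

/-! ### d-graphs and the random d-graph `G*(n,p)` -/

/-- A d-graph: vertices, usual edges, and dummy edges (identified with sparse clean
`F`-cycles). -/
abbrev DGraph (V : Type*) := Finset V × Finset (Sym2 V) × Finset (FGraph V)

/-- All potential usual edges on `Fin n`. -/
def allUsual (n : ℕ) : Finset (Sym2 (Fin n)) := Finset.univ.filter fun e => ¬e.IsDiag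

/-- All potential dummy edges on `Fin n`: the sparse clean `F`-cycles. -/
def allDummies (r n : ℕ) (F : SimpleGraph (Fin r)) : Finset (FGraph (Fin n)) :=
  Finset.univ.filter fun C => IsSparse F C

/-- Expectation of `X` under the random d-graph `G*(n,p)`: each usual edge and each dummy
edge is included independently with probability `p`. -/
def dgExp (r n : ℕ) (F : SimpleGraph (Fin r)) (p : ℝ)
    (X : Finset (Sym2 (Fin n)) → Finset (FGraph (Fin n)) → ℝ) : ℝ :=
  ∑ U ∈ (allUsual n).powerset, ∑ D ∈ (allDummies r n F).powerset,
    p ^ (U.card + D.card) *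
      (1 - p) ^ (((allUsual n).card - U.card) + ((allDummies r n F).card - D.card)) * X U D

/-- Probability of `P` under the random d-graph `G*(n,p)`. -/
def dgProb (r n : ℕ) (F : SimpleGraph (Fin r)) (p : ℝ)
    (P : Finset (Sym2 (Fin n)) → Finset (FGraph (Fin n)) → Prop) : ℝ :=
  dgExp r n F p fun U D => if P U D then 1 else 0

/-- Image of a d-graph under a vertex map. -/
def DGraph.map {V W : Type*} [DecidableEq V] [DecidableEq W] (ψ : V → W)
    (K : DGraph V) : DGraph W :=
  (K.1.image ψ, K.2.1.image (Sym2.map ψ), K.2.2.image (FGraph.map ψ))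

/-- `K` is isomorphic to `L` as a d-graph. -/
def DGraph.IsoTo {V W : Type*} [DecidableEq V] [DecidableEq W] (K : DGraph V)
    (L : DGraph W) : Prop :=
  ∃ ψ : V → W, Set.InjOn ψ ↑K.1 ∧ DGraph.map ψ K = L

/-- The number of copies of the d-graph `K` inside the d-graph on `Fin n` with usual edges
`U` and dummy edges `D`. -/
def dCopyCount {V : Type*} [DecidableEq V] (K : DGraph V) {n : ℕ}
    (U : Finset (Sym2 (Fin n))) (D : Finset (FGraph (Fin n))) : ℕ :=
  Nat.card {L : DGraph (Fin n) // L.2.1 ⊆ U ∧ L.2.2 ⊆ D ∧ DGraph.IsoTo K L}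

/-- Union of two d-graphs. -/
def DGraph.union {V : Type*} [DecidableEq V] (K L : DGraph V) : DGraph V :=
  (K.1 ∪ L.1, K.2.1 ∪ L.2.1, K.2.2 ∪ L.2.2)

/-- `G` is the clean d-cycle corresponding to the clean `F`-cycle `C`: the shadow graph of
`C` if `C` is dense, together with the dummy edge `C` if `C` is sparse. -/
def IsCleanDCycleOf {r : ℕ} {V : Type*} [DecidableEq V] (F : SimpleGraph (Fin r))
    (G : DGraph V) (C : FGraph V) : Prop :=
  (IsCleanCycle F C ∧ ¬IsSparse F C ∧ G = (C.1, shadowEdges C, (∅ : Finset (FGraph V)))) ∨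
  (IsSparse F C ∧ G = (C.1, shadowEdges C, ({C} : Finset (FGraph V))))



/-! ### Auxiliary lemmas -/

private lemma ncard_biUnion_eq_sum {α ι : Type*} [Fintype α] (s : Finset ι) (f : ι → Set α)
    (h : ∀ i ∈ s, ∀ j ∈ s, i ≠ j → Disjoint (f i) (f j)) :
    (⋃ i ∈ s, f i).ncard = ∑ i ∈ s, (f i).ncard := by
  classical
  induction s using Finset.induction with
  | empty => simp
  | @insert a t ha ih =>
    rw [Finset.sum_insert ha]
    have hu : (⋃ i ∈ insert a t, f i) = f a ∪ ⋃ i ∈ t, f i := by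
      simp
    rw [hu, Set.ncard_union_eq ?_ (Set.toFinite _) (Set.toFinite _),
      ih fun i hi j hj hij => h i (Finset.mem_insert_of_mem hi) j (Finset.mem_insert_of_mem hj) hij]
    · rw [Set.disjoint_iUnion₂_right]
      intro i hi
      exact h a (Finset.mem_insert_self a t) i (Finset.mem_insert_of_mem hi)
        (by rintro rfl; exact ha hi)

/-- If `F` is strictly 1-balanced then every subgraph `S` of `F` with at
least one edge and `e(S) < e(F)` satisfies `e(S) < d₁(F)·(v(S) - c(S))`. -/
theorem subgraph_edge_bound {r : ℕ} (F : SimpleGraph (Fin r)) (hF : Strictly1Balanced F)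
    (S : F.Subgraph) (h1 : 1 ≤ S.edgeSet.ncard) (h2 : S.edgeSet.ncard < edgeCnt F) :
    (S.edgeSet.ncard : ℝ)
      < d1 F * ((S.verts.ncard : ℝ) - (Nat.card S.coe.ConnectedComponent : ℝ)) := by
  classical
  haveI : Fintype S.coe.ConnectedComponent := Fintype.ofFinite _
  -- there is an edge, hence `2 ≤ r`
  obtain ⟨e₀, he₀⟩ := Set.nonempty_of_ncard_ne_zero (by omega : S.edgeSet.ncard ≠ 0)
  have hr2 : 2 ≤ r := by
    induction e₀ using Sym2.ind with
    | _ u v =>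
      rw [SimpleGraph.Subgraph.mem_edgeSet] at he₀
      have hne : u ≠ v := he₀.adj_sub.ne
      have : Nontrivial (Fin r) := ⟨u, v, hne⟩
      have h := Fintype.one_lt_card (α := Fin r)
      simp only [Fintype.card_fin] at h
      omega
  have hd1 : 0 ≤ d1 F := by
    apply div_nonneg (by positivity)
    have : (2 : ℝ) ≤ (r : ℝ) := by exact_mod_cast hr2
    linarith
  -- components and the pieces of `S` they induce
  set A : S.coe.ConnectedComponent → Set (Fin r) :=
    fun K => Subtype.val '' K.supp with hA
  set T : S.coe.ConnectedComponent → F.Subgraph := fun K => S.induce (A K) with hT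
  have hTedge : ∀ K, (T K).edgeSet ⊆ S.edgeSet := by
    intro K e he
    induction e using Sym2.ind with
    | _ u v =>
      rw [SimpleGraph.Subgraph.mem_edgeSet] at he ⊢
      exact he.2.2
  -- edge partition
  have hEU : ⋃ K, (T K).edgeSet = S.edgeSet := by
    apply Set.Subset.antisymm (Set.iUnion_subset hTedge)
    intro e he
    induction e using Sym2.ind with
    | _ u v =>
      rw [SimpleGraph.Subgraph.mem_edgeSet] at he
      have hu : u ∈ S.verts := he.fst_mem
      have hv : v ∈ S.verts := he.snd_mem
      refine Set.mem_iUnion.2 ⟨S.coe.connectedComponentMk ⟨u, hu⟩, ?_⟩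
      rw [SimpleGraph.Subgraph.mem_edgeSet, hT, SimpleGraph.Subgraph.induce_adj]
      have hadj : S.coe.Adj ⟨v, hv⟩ ⟨u, hu⟩ := by
        rw [SimpleGraph.Subgraph.coe_adj]; exact he.symm
      exact ⟨⟨⟨u, hu⟩, rfl, rfl⟩,
        ⟨⟨v, hv⟩, SimpleGraph.ConnectedComponent.connectedComponentMk_eq_of_adj hadj, rfl⟩, he⟩
  have hED : ∀ K K', K ≠ K' → Disjoint ((T K).edgeSet) ((T K').edgeSet) := by
    intro K K' hKK'
    rw [Set.disjoint_left]
    intro e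
    induction e using Sym2.ind with
    | _ u v =>
      intro h1 h2
      rw [SimpleGraph.Subgraph.mem_edgeSet, hT, SimpleGraph.Subgraph.induce_adj] at h1 h2
      obtain ⟨x, hx, hxu⟩ := h1.1
      obtain ⟨y, hy, hyu⟩ := h2.1
      have hxy : x = y := Subtype.val_injective (hxu.trans hyu.symm)
      rw [SimpleGraph.ConnectedComponent.mem_supp_iff] at hx hy
      exact hKK' (hx ▸ hxy ▸ hy)
  -- vertex partition
  have hVU : ⋃ K, A K = S.verts := by
    rw [hA, ← Set.image_iUnion, SimpleGraph.iUnion_connectedComponentSupp,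
      Set.image_univ, Subtype.range_coe]
  have hVD : ∀ K K', K ≠ K' → Disjoint (A K) (A K') := by
    intro K K' hKK'
    rw [hA]
    exact Set.disjoint_image_of_injective Subtype.val_injective
      (SimpleGraph.pairwise_disjoint_supp_connectedComponent _ hKK')
  -- the count identities
  have hE : S.edgeSet.ncard = ∑ K, (T K).edgeSet.ncard := by
    rw [← hEU, ← ncard_biUnion_eq_sum Finset.univ _
      (fun i _ j _ hij => hED i j hij)]
    simp
  have hV : S.verts.ncard = ∑ K, (A K).ncard := by
    have hn : S.verts.ncard = (⋃ K, A K).ncard := by rw [hVU]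
    rw [hn, ← ncard_biUnion_eq_sum Finset.univ _
      (fun i _ j _ hij => hVD i j hij)]
    simp
  have hC : (Nat.card S.coe.ConnectedComponent : ℝ)
      = ∑ _K : S.coe.ConnectedComponent, (1 : ℝ) := by
    rw [Nat.card_eq_fintype_card, Finset.sum_const, Finset.card_univ]
    simp
  -- per-component bounds
  have hA1 : ∀ K, 1 ≤ (A K).ncard := by
    intro K
    obtain ⟨w, hw⟩ := K.exists_rep
    have : (A K).Nonempty := ⟨w.val, w, hw, rfl⟩
    exact (Set.ncard_pos (Set.toFinite _)).2 this
  have key : ∀ K, ((T K).edgeSet.ncard : ℝ) ≤ d1 F * (((A K).ncard : ℝ) - 1) := by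
    intro K
    rcases Nat.eq_zero_or_pos (T K).edgeSet.ncard with h0 | hpos
    · rw [h0]
      push_cast
      have : (1 : ℝ) ≤ ((A K).ncard : ℝ) := by exact_mod_cast hA1 K
      have := hd1
      nlinarith
    · -- strict case, proved below; use the strict bound
      have hne : T K ≠ ⊤ := by
        intro htop
        have h1 : (T K).edgeSet.ncard ≤ S.edgeSet.ncard :=
          Set.ncard_le_ncard (hTedge K) (Set.toFinite _)
        rw [htop, SimpleGraph.Subgraph.edgeSet_top] at h1
        exact absurd (lt_of_le_of_lt h1 h2) (lt_irrefl _)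
      have hv2 : 2 ≤ (T K).verts.ncard := by
        obtain ⟨e, he⟩ := Set.nonempty_of_ncard_ne_zero hpos.ne'
        revert he
        induction e using Sym2.ind with
        | _ u v =>
          intro he
          rw [SimpleGraph.Subgraph.mem_edgeSet] at he
          refine (Set.one_lt_ncard_iff (Set.toFinite _)).2 ⟨u, v, he.fst_mem, he.snd_mem, ?_⟩
          exact he.adj_sub.ne
      have hlt := hF (T K) hne hv2 hpos
      have hverts : (T K).verts = A K := rfl
      have hv2' : (2 : ℝ) ≤ ((T K).verts.ncard : ℝ) := by exact_mod_cast hv2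
      rw [div_lt_iff₀ (by linarith)] at hlt
      rw [hverts] at hlt hv2'
      linarith [hlt]
  -- a component with an edge gives strictness
  have hex : ∃ K₀ : S.coe.ConnectedComponent, 1 ≤ (T K₀).edgeSet.ncard := by
    by_contra hcon
    push_neg at hcon
    have hz : ∑ K, (T K).edgeSet.ncard = 0 :=
      Finset.sum_eq_zero fun K _ => Nat.lt_one_iff.mp (hcon K)
    rw [hE, hz] at h1
    exact absurd h1 (by norm_num)
  obtain ⟨K₀, hK₀⟩ := hex
  have keylt : ((T K₀).edgeSet.ncard : ℝ) < d1 F * (((A K₀).ncard : ℝ) - 1) := by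
    have hne : T K₀ ≠ ⊤ := by
      intro htop
      have h1 : (T K₀).edgeSet.ncard ≤ S.edgeSet.ncard :=
        Set.ncard_le_ncard (hTedge K₀) (Set.toFinite _)
      rw [htop, SimpleGraph.Subgraph.edgeSet_top] at h1
      exact absurd (lt_of_le_of_lt h1 h2) (lt_irrefl _)
    have hv2 : 2 ≤ (T K₀).verts.ncard := by
      obtain ⟨e, he⟩ := Set.nonempty_of_ncard_ne_zero (Nat.one_le_iff_ne_zero.mp hK₀)
      revert he
      induction e using Sym2.ind with
      | _ u v =>
        intro he
        rw [SimpleGraph.Subgraph.mem_edgeSet] at he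
        refine (Set.one_lt_ncard_iff (Set.toFinite _)).2 ⟨u, v, he.fst_mem, he.snd_mem, ?_⟩
        exact he.adj_sub.ne
    have hlt := hF (T K₀) hne hv2 hK₀
    have hverts : (T K₀).verts = A K₀ := rfl
    have hv2' : (2 : ℝ) ≤ ((T K₀).verts.ncard : ℝ) := by exact_mod_cast hv2
    rw [div_lt_iff₀ (by linarith)] at hlt
    rw [hverts] at hlt hv2'
    exact hlt
  -- assemble
  calc (S.edgeSet.ncard : ℝ) = ∑ K, ((T K).edgeSet.ncard : ℝ) := by
        rw [hE]; push_cast; rfl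
    _ < ∑ K, d1 F * (((A K).ncard : ℝ) - 1) := by
        refine Finset.sum_lt_sum (fun K _ => key K) ⟨K₀, Finset.mem_univ _, keylt⟩
    _ = d1 F * ((S.verts.ncard : ℝ) - (Nat.card S.coe.ConnectedComponent : ℝ)) := by
        rw [← Finset.mul_sum, Finset.sum_sub_distrib, hC, hV]
        push_cast
        ring

end
end

section
/- Let F be a strictly 1-balanced graph on r ≥ 3 vertices with 1-density d_1(F), let C be a clean F-cycle of length k ≥ 2, and let G be its corresponding clean d-cycle, so that v(G) = k(r−1) and e(G) = k·e(F). Then every sub-d-graph S of G with vertex set V(G) whose edge set (usual and dummy edges together) is a proper subset of the edge set of G, i.e. with e(S) < e(G), satisfies e(S) < d_1(F) · (v(S) − c(S) + 1), where c(S) is the number of connected components of the graph formed by the vertices and usual edges of S (isolated vertices counting as components). -/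
open scoped Classical
open Filter Asymptotics

noncomputable section

namespace DP

variable {V : Type*} [DecidableEq V]

/-- Support of a finite edge set. -/
def esupp (E : Finset (Sym2 V)) : Finset V :=
  E.sup fun e => Sym2.lift ⟨fun a b => ({a, b} : Finset V), fun a b => Finset.pair_comm a b⟩ e

lemma mem_esupp {E : Finset (Sym2 V)} {x : V} : x ∈ esupp E ↔ ∃ e ∈ E, x ∈ e := by
  unfold esupp
  rw [Finset.mem_sup]
  refine exists_congr fun e => and_congr_right fun he => ?_
  induction e with
  | _ a b => simp [Sym2.mem_iff]

lemma esupp_union {E₁ E₂ : Finset (Sym2 V)} : esupp (E₁ ∪ E₂) = esupp E₁ ∪ esupp E₂ :=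
  Finset.sup_union

lemma esupp_mono {E₁ E₂ : Finset (Sym2 V)} (h : E₁ ⊆ E₂) : esupp E₁ ⊆ esupp E₂ := by
  intro x hx
  obtain ⟨e, he, hxe⟩ := mem_esupp.1 hx
  exact mem_esupp.2 ⟨e, h he, hxe⟩

@[simp] lemma esupp_empty : esupp (∅ : Finset (Sym2 V)) = ∅ := rfl

/-- The graph spanned by a finite edge set. -/
def gr (E : Finset (Sym2 V)) : SimpleGraph V := SimpleGraph.fromEdgeSet (E : Set (Sym2 V))

lemma gr_adj {E : Finset (Sym2 V)} {a b : V} : (gr E).Adj a b ↔ s(a, b) ∈ E ∧ a ≠ b := by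
  simp [gr]

lemma gr_mono {E₁ E₂ : Finset (Sym2 V)} (h : E₁ ⊆ E₂) : gr E₁ ≤ gr E₂ :=
  SimpleGraph.fromEdgeSet_mono (by exact_mod_cast h)

lemma adj_mem_esupp {E : Finset (Sym2 V)} {a b : V} (h : (gr E).Adj a b) :
    a ∈ esupp E ∧ b ∈ esupp E := by
  rw [gr_adj] at h
  exact ⟨mem_esupp.2 ⟨_, h.1, by simp⟩, mem_esupp.2 ⟨_, h.1, by simp⟩⟩

lemma reach_eq_of_not_supp {E : Finset (Sym2 V)} {x y : V} (hx : x ∉ esupp E)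
    (h : (gr E).Reachable x y) : y = x := by
  obtain ⟨w⟩ := h
  cases w with
  | nil => rfl
  | cons h p => exact absurd (adj_mem_esupp h).1 hx

lemma mem_esupp_of_reach_ne {E : Finset (Sym2 V)} {x y : V}
    (h : (gr E).Reachable x y) (hxy : x ≠ y) : x ∈ esupp E ∧ y ∈ esupp E := by
  constructor
  · by_contra hx; exact hxy (reach_eq_of_not_supp hx h).symm
  · by_contra hy; exact hxy ((reach_eq_of_not_supp hy h.symm))

/-- Reachability class of `x` within `W`. -/
def cls (W : Finset V) (E : Finset (Sym2 V)) (x : V) : Finset V :=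
  W.filter fun y => (gr E).Reachable x y

lemma cls_eq_of_reach {W : Finset V} {E : Finset (Sym2 V)} {x y : V}
    (h : (gr E).Reachable x y) : cls W E x = cls W E y := by
  unfold cls
  apply Finset.filter_congr
  intro z _
  exact ⟨fun hz => h.symm.trans hz, fun hz => h.trans hz⟩

lemma reach_of_cls_eq {W : Finset V} {E : Finset (Sym2 V)} {x y : V} (hy : y ∈ W)
    (h : cls W E x = cls W E y) : (gr E).Reachable x y := by
  have : y ∈ cls W E y := Finset.mem_filter.2 ⟨hy, SimpleGraph.Reachable.refl y⟩
  rw [← h] at this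
  exact (Finset.mem_filter.1 this).2

/-- Number of reachability classes meeting `W`. -/
def ccnt (W : Finset V) (E : Finset (Sym2 V)) : ℕ := (W.image (cls W E)).card

lemma ccnt_le_card {W : Finset V} {E : Finset (Sym2 V)} : ccnt W E ≤ W.card :=
  Finset.card_image_le

@[simp] lemma ccnt_empty_supp {E : Finset (Sym2 V)} : ccnt (∅ : Finset V) E = 0 := by
  simp [ccnt]


/-! ### Factoring helpers for image cardinalities -/

lemma image_card_le_of_factor {α β γ : Type*} [DecidableEq β] [DecidableEq γ]
    (s : Finset α) (f : α → β) (g : α → γ)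
    (h : ∀ x ∈ s, ∀ y ∈ s, g x = g y → f x = f y) :
    (s.image f).card ≤ (s.image g).card := by
  rcases s.eq_empty_or_nonempty with rfl | ⟨a₀, ha₀⟩
  · simp
  set σ : γ → β := fun t => if ht : ∃ x ∈ s, g x = t then f ht.choose else f a₀ with hσ
  apply Finset.card_le_card_of_surjOn σ
  intro b hb
  obtain ⟨x, hx, rfl⟩ := Finset.mem_image.1 hb
  refine ⟨g x, Finset.mem_coe.2 (Finset.mem_image_of_mem g hx), ?_⟩
  have ht : ∃ z ∈ s, g z = g x := ⟨x, hx, rfl⟩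
  simp only [hσ, dif_pos ht]
  exact h _ ht.choose_spec.1 _ hx ht.choose_spec.2

lemma image_card_add_one_le_of_factor {α β γ : Type*} [DecidableEq β] [DecidableEq γ]
    (s : Finset α) (f : α → β) (g : α → γ)
    (h : ∀ x ∈ s, ∀ y ∈ s, g x = g y → f x = f y)
    {x₀ y₀ : α} (hx₀ : x₀ ∈ s) (hy₀ : y₀ ∈ s) (hg : g x₀ ≠ g y₀) (hf : f x₀ = f y₀) :
    (s.image f).card + 1 ≤ (s.image g).card := by
  set σ : γ → β := fun t => if ht : ∃ x ∈ s, g x = t then f ht.choose else f x₀ with hσ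
  have key : (s.image f).card ≤ ((s.image g).erase (g x₀)).card := by
    apply Finset.card_le_card_of_surjOn σ
    intro b hb
    obtain ⟨x, hx, rfl⟩ := Finset.mem_image.1 hb
    by_cases hgx : g x = g x₀
    · have ht : ∃ z ∈ s, g z = g y₀ := ⟨y₀, hy₀, rfl⟩
      refine ⟨g y₀, Finset.mem_coe.2 (Finset.mem_erase.2
        ⟨fun hc => hg hc.symm, Finset.mem_image_of_mem g hy₀⟩), ?_⟩
      simp only [hσ, dif_pos ht]
      have := h _ ht.choose_spec.1 _ hy₀ ht.choose_spec.2
      rw [this, ← hf]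
      exact (h _ hx₀ _ hx hgx.symm)
    · have ht : ∃ z ∈ s, g z = g x := ⟨x, hx, rfl⟩
      refine ⟨g x, Finset.mem_coe.2 (Finset.mem_erase.2 ⟨hgx, Finset.mem_image_of_mem g hx⟩), ?_⟩
      simp only [hσ, dif_pos ht]
      exact h _ ht.choose_spec.1 _ hx ht.choose_spec.2
  have hmem : g x₀ ∈ s.image g := Finset.mem_image_of_mem g hx₀
  rw [Finset.card_erase_of_mem hmem] at key
  have hpos : 1 ≤ (s.image g).card := Finset.card_pos.2 ⟨_, hmem⟩
  omega

/-! ### Union bounds on class counts -/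

lemma image_cls_card_le {E E' : Finset (Sym2 V)} (hEE : E ⊆ E') {W W' : Finset V} :
    (W.image (cls W' E')).card ≤ ccnt W E := by
  apply image_card_le_of_factor
  intro x hx y hy hg
  exact cls_eq_of_reach ((reach_of_cls_eq hy hg).mono (gr_mono hEE))

lemma ccnt_union_eq_ab {E₁ E₂ : Finset (Sym2 V)} :
    ccnt (esupp (E₁ ∪ E₂)) (E₁ ∪ E₂) =
      ((esupp E₁).image (cls (esupp E₁ ∪ esupp E₂) (E₁ ∪ E₂)) ∪
       (esupp E₂).image (cls (esupp E₁ ∪ esupp E₂) (E₁ ∪ E₂))).card := by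
  rw [ccnt, esupp_union, Finset.image_union]

lemma ccnt_union_le₀ {E₁ E₂ : Finset (Sym2 V)} :
    ccnt (esupp (E₁ ∪ E₂)) (E₁ ∪ E₂) ≤ ccnt (esupp E₁) E₁ + ccnt (esupp E₂) E₂ := by
  rw [ccnt_union_eq_ab]
  calc _ ≤ _ + _ := Finset.card_union_le _ _
    _ ≤ _ := Nat.add_le_add (image_cls_card_le Finset.subset_union_left)
        (image_cls_card_le Finset.subset_union_right)

lemma ccnt_union_le₁ {E₁ E₂ : Finset (Sym2 V)} {x : V}
    (hx₁ : x ∈ esupp E₁) (hx₂ : x ∈ esupp E₂) :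
    ccnt (esupp (E₁ ∪ E₂)) (E₁ ∪ E₂) + 1 ≤ ccnt (esupp E₁) E₁ + ccnt (esupp E₂) E₂ := by
  rw [ccnt_union_eq_ab]
  set c := cls (esupp E₁ ∪ esupp E₂) (E₁ ∪ E₂) with hc
  set A := (esupp E₁).image c with hA
  set B := (esupp E₂).image c with hB
  have h1 : A.card ≤ ccnt (esupp E₁) E₁ := image_cls_card_le Finset.subset_union_left
  have h2 : B.card ≤ ccnt (esupp E₂) E₂ := image_cls_card_le Finset.subset_union_right
  have hint : 1 ≤ (A ∩ B).card :=
    Finset.card_pos.2 ⟨c x, Finset.mem_inter.2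
      ⟨Finset.mem_image_of_mem c hx₁, Finset.mem_image_of_mem c hx₂⟩⟩
  have hcu := Finset.card_union_add_card_inter A B
  omega

lemma ccnt_union_le₂ {E₁ E₂ : Finset (Sym2 V)} {x y : V}
    (hx₁ : x ∈ esupp E₁) (hx₂ : x ∈ esupp E₂) (hy₁ : y ∈ esupp E₁) (hy₂ : y ∈ esupp E₂)
    (hxy : x ≠ y) (hnr : ¬ (gr E₁).Reachable x y) :
    ccnt (esupp (E₁ ∪ E₂)) (E₁ ∪ E₂) + 2 ≤ ccnt (esupp E₁) E₁ + ccnt (esupp E₂) E₂ := by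
  rw [ccnt_union_eq_ab]
  set c := cls (esupp E₁ ∪ esupp E₂) (E₁ ∪ E₂) with hc
  set A := (esupp E₁).image c with hA
  set B := (esupp E₂).image c with hB
  have hfac : ∀ z ∈ esupp E₁, ∀ w ∈ esupp E₁,
      cls (esupp E₁) E₁ z = cls (esupp E₁) E₁ w → c z = c w := by
    intro z hz w hw hg
    exact cls_eq_of_reach ((reach_of_cls_eq hw hg).mono (gr_mono Finset.subset_union_left))
  have h2 : B.card ≤ ccnt (esupp E₂) E₂ := image_cls_card_le Finset.subset_union_right
  have hcu := Finset.card_union_add_card_inter A B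
  by_cases hcxy : c x = c y
  · have h1 : A.card + 1 ≤ ccnt (esupp E₁) E₁ := by
      apply image_card_add_one_le_of_factor _ _ _ hfac hx₁ hy₁ _ hcxy
      intro hg
      exact hnr (reach_of_cls_eq hy₁ hg)
    have hint : 1 ≤ (A ∩ B).card :=
      Finset.card_pos.2 ⟨c x, Finset.mem_inter.2
        ⟨Finset.mem_image_of_mem c hx₁, Finset.mem_image_of_mem c hx₂⟩⟩
    omega
  · have h1 : A.card ≤ ccnt (esupp E₁) E₁ := image_cls_card_le Finset.subset_union_left
    have hint : 2 ≤ (A ∩ B).card := by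
      have hsub : ({c x, c y} : Finset (Finset V)) ⊆ A ∩ B := by
        intro t ht
        rcases Finset.mem_insert.1 ht with rfl | ht
        · exact Finset.mem_inter.2 ⟨Finset.mem_image_of_mem c hx₁, Finset.mem_image_of_mem c hx₂⟩
        · rw [Finset.mem_singleton.1 ht]
          exact Finset.mem_inter.2 ⟨Finset.mem_image_of_mem c hy₁, Finset.mem_image_of_mem c hy₂⟩
      calc 2 = ({c x, c y} : Finset (Finset V)).card := (Finset.card_pair hcxy).symm
        _ ≤ _ := Finset.card_le_card hsub
    omega


/-! ### Cut lemma and reachability via walks -/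

lemma reach_side {E : Finset (Sym2 V)} {A B : Finset V}
    (hE : ∀ e ∈ E, (∀ a ∈ e, a ∈ A) ∨ (∀ a ∈ e, a ∈ B))
    (hd : ∀ z, ¬(z ∈ A ∧ z ∈ B)) {x y : V} (hx : x ∈ A)
    (hr : (gr E).Reachable x y) : y ∈ A := by
  obtain ⟨w⟩ := hr
  induction w with
  | nil => exact hx
  | @cons a b c hab p ih =>
    apply ih
    have hmem : s(a, b) ∈ E := (gr_adj.1 hab).1
    rcases hE _ hmem with hA | hB
    · exact hA b (by simp)
    · exact absurd ⟨hx, hB a (by simp)⟩ (hd a)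

/-- Every vertex on a walk starting at `x` is reachable from `x`;
in particular each edge of the walk joins two vertices reachable from `x`. -/
lemma reach_of_walk_mem {G : SimpleGraph V} {x y : V} (w : G.Walk x y) {z : V}
    (hz : z ∈ w.support) : G.Reachable x z := by
  induction w with
  | nil => simp at hz; subst hz; exact SimpleGraph.Reachable.refl _
  | @cons a b c hab p ih =>
    rw [SimpleGraph.Walk.support_cons] at hz
    rcases List.mem_cons.1 hz with rfl | hz
    · exact SimpleGraph.Reachable.refl _
    · exact (SimpleGraph.Adj.reachable hab).trans (ih hz)

/-- If every `E`-edge both of whose endpoints are reachable from `x` belongs to `E'`,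
then walks in `gr E` from points reachable from `x` give reachability in `gr E'`. -/
lemma reach_restrict_walk {E E' : Finset (Sym2 V)} {x : V}
    (hcl : ∀ e ∈ E, (∀ a ∈ e, (gr E).Reachable x a) → e ∈ E') :
    ∀ {a y : V}, (gr E).Reachable x a → (gr E).Walk a y → (gr E').Reachable a y := by
  intro a y ha w
  revert ha
  induction w with
  | nil => intro _; exact SimpleGraph.Reachable.refl _
  | @cons u v z huv p ih =>
    intro ha
    have hb : (gr E).Reachable x v := ha.trans huv.reachable
    have he' : s(u, v) ∈ E' := by
      apply hcl _ (gr_adj.1 huv).1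
      intro t ht
      rcases Sym2.mem_iff.1 ht with rfl | rfl
      · exact ha
      · exact hb
    exact (SimpleGraph.Adj.reachable (gr_adj.2 ⟨he', huv.ne⟩)).trans (ih hb)

lemma reach_restrict {E E' : Finset (Sym2 V)} {x : V}
    (hcl : ∀ e ∈ E, (∀ a ∈ e, (gr E).Reachable x a) → e ∈ E') {y : V}
    (hr : (gr E).Reachable x y) : (gr E').Reachable x y := by
  obtain ⟨w⟩ := hr
  exact reach_restrict_walk hcl (SimpleGraph.Reachable.refl x) w

/-! ### Bridge to `Nat.card` of connected components -/

lemma reach_induce {E : Finset (Sym2 V)} {W : Finset V} (hW : esupp E ⊆ W) :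
    ∀ {x y : V} (hx : x ∈ W) (hy : y ∈ W), (gr E).Reachable x y →
      ((gr E).induce (W : Set V)).Reachable ⟨x, hx⟩ ⟨y, hy⟩ := by
  intro x y hx hy hr
  obtain ⟨w⟩ := hr
  revert hx hy
  induction w with
  | nil => intro hx hy; exact SimpleGraph.Reachable.refl _
  | @cons a b c hab p ih =>
    intro hx hy
    have hb : b ∈ W := hW (adj_mem_esupp hab).2
    have hadj : ((gr E).induce (W : Set V)).Adj ⟨a, hx⟩ ⟨b, hb⟩ := by simpa using hab
    exact hadj.reachable.trans (ih hb hy)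

lemma ncomp_le_ccnt {E : Finset (Sym2 V)} {W : Finset V} (hW : esupp E ⊆ W) :
    Nat.card ((gr E).induce (W : Set V)).ConnectedComponent ≤ ccnt W E := by
  classical
  rcases W.eq_empty_or_nonempty with rfl | ⟨w₀, hw₀⟩
  · have : IsEmpty ((gr E).induce ((∅ : Finset V) : Set V)).ConnectedComponent := by
      constructor
      intro c
      refine c.ind (fun v => ?_)
      have := v.2; simp at this
    simp [Nat.card_of_isEmpty]
  have hsurj : Function.Surjective
      (fun t : ↥(W.image (cls W E)) =>
        (((gr E).induce (W : Set V)).connectedComponentMk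
          ⟨(Finset.mem_image.1 t.2).choose, (Finset.mem_image.1 t.2).choose_spec.1⟩)) := by
    intro c
    refine c.ind (fun v => ?_)
    have hv : (v : V) ∈ W := v.2
    refine ⟨⟨cls W E v, Finset.mem_image_of_mem _ hv⟩, ?_⟩
    set t : ↥(W.image (cls W E)) := ⟨cls W E v, Finset.mem_image_of_mem _ hv⟩ with ht
    have hch := (Finset.mem_image.1 t.2).choose_spec
    apply SimpleGraph.ConnectedComponent.sound
    have hreach : (gr E).Reachable (Finset.mem_image.1 t.2).choose (v : V) :=
      reach_of_cls_eq hv hch.2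
    have := reach_induce hW hch.1 hv hreach
    convert this using 2
  calc Nat.card ((gr E).induce (W : Set V)).ConnectedComponent
      ≤ Nat.card ↥(W.image (cls W E)) := Nat.card_le_card_of_surjective _ hsurj
    _ = ccnt W E := by simpa [ccnt] using Nat.card_eq_finsetCard (W.image (cls W E))

/-! ### Removing isolated vertices -/

lemma ccnt_le_ccnt_esupp_add {E : Finset (Sym2 V)} {W : Finset V} (hW : esupp E ⊆ W) :
    ccnt W E ≤ ccnt (esupp E) E + (W.card - (esupp E).card) := by
  have hsplit : W.image (cls W E) =
      (esupp E).image (cls W E) ∪ (W \ esupp E).image (cls W E) := by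
    rw [← Finset.image_union, Finset.union_sdiff_of_subset hW]
  rw [ccnt, hsplit]
  calc ((esupp E).image (cls W E) ∪ (W \ esupp E).image (cls W E)).card
      ≤ _ + _ := Finset.card_union_le _ _
    _ ≤ ccnt (esupp E) E + (W.card - (esupp E).card) := by
        apply Nat.add_le_add
        · exact image_cls_card_le (le_refl E)
        · calc ((W \ esupp E).image (cls W E)).card ≤ (W \ esupp E).card :=
              Finset.card_image_le
            _ = W.card - (esupp E).card := Finset.card_sdiff_of_subset hW

/-! ### Real-valued rank -/

/-- Rank `|supp| - #components` of a finite edge set, as a real number. -/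
def rkR (E : Finset (Sym2 V)) : ℝ := ((esupp E).card : ℝ) - (ccnt (esupp E) E : ℝ)

lemma ccnt_esupp_le {E : Finset (Sym2 V)} : ccnt (esupp E) E ≤ (esupp E).card :=
  ccnt_le_card

lemma rkR_nonneg {E : Finset (Sym2 V)} : 0 ≤ rkR E := by
  have := ccnt_esupp_le (E := E)
  rw [rkR]
  have : (ccnt (esupp E) E : ℝ) ≤ ((esupp E).card : ℝ) := by exact_mod_cast this
  linarith

@[simp] lemma rkR_empty : rkR (∅ : Finset (Sym2 V)) = 0 := by simp [rkR]

lemma rkR_union_ge_aux {E₁ E₂ : Finset (Sym2 V)} (m : ℕ)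
    (hcc : ccnt (esupp (E₁ ∪ E₂)) (E₁ ∪ E₂) + (esupp E₁ ∩ esupp E₂).card ≤
      ccnt (esupp E₁) E₁ + ccnt (esupp E₂) E₂ + m) :
    rkR E₁ + rkR E₂ - m ≤ rkR (E₁ ∪ E₂) := by
  have hsup := Finset.card_union_add_card_inter (esupp E₁) (esupp E₂)
  have h1 : ((esupp E₁ ∪ esupp E₂).card : ℝ) + ((esupp E₁ ∩ esupp E₂).card : ℝ) =
      ((esupp E₁).card : ℝ) + ((esupp E₂).card : ℝ) := by exact_mod_cast hsup
  have h2 : ((esupp (E₁ ∪ E₂)).card : ℝ) = ((esupp E₁ ∪ esupp E₂).card : ℝ) := by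
    rw [esupp_union]
  have h3 : (ccnt (esupp (E₁ ∪ E₂)) (E₁ ∪ E₂) : ℝ) + ((esupp E₁ ∩ esupp E₂).card : ℝ) ≤
      (ccnt (esupp E₁) E₁ : ℝ) + (ccnt (esupp E₂) E₂ : ℝ) + (m : ℝ) := by exact_mod_cast hcc
  unfold rkR
  linarith

lemma rkR_union_ge₁ {E₁ E₂ : Finset (Sym2 V)}
    (ht : (esupp E₁ ∩ esupp E₂).card ≤ 1) :
    rkR E₁ + rkR E₂ ≤ rkR (E₁ ∪ E₂) := by
  have := rkR_union_ge_aux (E₁ := E₁) (E₂ := E₂) 0 ?_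
  · simpa using this
  rcases Nat.eq_zero_or_pos (esupp E₁ ∩ esupp E₂).card with h0 | hpos
  · rw [h0]
    simpa using ccnt_union_le₀
  · obtain ⟨x, hx⟩ := Finset.card_pos.1 hpos
    obtain ⟨hx₁, hx₂⟩ := Finset.mem_inter.1 hx
    have h1 : (esupp E₁ ∩ esupp E₂).card = 1 := le_antisymm ht hpos
    rw [h1]
    simpa using ccnt_union_le₁ hx₁ hx₂

lemma rkR_union_ge₂ {E₁ E₂ : Finset (Sym2 V)}
    (ht : (esupp E₁ ∩ esupp E₂).card ≤ 2) :
    rkR E₁ + rkR E₂ - 1 ≤ rkR (E₁ ∪ E₂) := by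
  rcases Nat.lt_or_ge (esupp E₁ ∩ esupp E₂).card 2 with h | h
  · have := rkR_union_ge₁ (E₁ := E₁) (E₂ := E₂) (by omega)
    linarith
  have h2 : (esupp E₁ ∩ esupp E₂).card = 2 := le_antisymm ht h
  obtain ⟨x, hx⟩ := Finset.card_pos.1 (by omega : 0 < (esupp E₁ ∩ esupp E₂).card)
  obtain ⟨hx₁, hx₂⟩ := Finset.mem_inter.1 hx
  have := rkR_union_ge_aux (E₁ := E₁) (E₂ := E₂) 1 ?_
  · simpa using this
  rw [h2]
  have := ccnt_union_le₁ (E₂ := E₂) hx₁ hx₂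
  omega

lemma rkR_union_ge₂' {E₁ E₂ : Finset (Sym2 V)} {x y : V}
    (ht : (esupp E₁ ∩ esupp E₂).card ≤ 2)
    (hx₁ : x ∈ esupp E₁) (hx₂ : x ∈ esupp E₂) (hy₁ : y ∈ esupp E₁) (hy₂ : y ∈ esupp E₂)
    (hxy : x ≠ y) (hnr : ¬ (gr E₁).Reachable x y) :
    rkR E₁ + rkR E₂ ≤ rkR (E₁ ∪ E₂) := by
  have hpair : ({x, y} : Finset V) ⊆ esupp E₁ ∩ esupp E₂ := by
    intro z hz
    rcases Finset.mem_insert.1 hz with rfl | hz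
    · exact Finset.mem_inter.2 ⟨hx₁, hx₂⟩
    · rw [Finset.mem_singleton.1 hz]; exact Finset.mem_inter.2 ⟨hy₁, hy₂⟩
  have h2 : (esupp E₁ ∩ esupp E₂).card = 2 := by
    have := Finset.card_le_card hpair
    rw [Finset.card_pair hxy] at this
    omega
  have := rkR_union_ge_aux (E₁ := E₁) (E₂ := E₂) 0 ?_
  · simpa using this
  rw [h2]
  have := ccnt_union_le₂ hx₁ hx₂ hy₁ hy₂ hxy hnr
  omega


/-! ### Splitting off the component of a vertex -/

/-- The set of edges of `E` in the reachability class of `x`. -/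
def clsE (E : Finset (Sym2 V)) (x : V) : Finset (Sym2 V) :=
  E.filter fun e => ∀ a ∈ e, (gr E).Reachable x a

lemma clsE_subset {E : Finset (Sym2 V)} {x : V} : clsE E x ⊆ E := Finset.filter_subset _ _

lemma mem_clsE {E : Finset (Sym2 V)} {x : V} {e : Sym2 V} :
    e ∈ clsE E x ↔ e ∈ E ∧ ∀ a ∈ e, (gr E).Reachable x a := Finset.mem_filter

lemma compl_clsE {E : Finset (Sym2 V)} (hnd : ∀ e ∈ E, ¬e.IsDiag) {x : V} {e : Sym2 V}
    (he : e ∈ E \ clsE E x) : ∀ a ∈ e, ¬(gr E).Reachable x a := by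
  obtain ⟨heE, hne⟩ := Finset.mem_sdiff.1 he
  intro a ha hr
  apply hne
  rw [mem_clsE]
  refine ⟨heE, ?_⟩
  induction e with
  | _ u v =>
    have huv : (gr E).Adj u v := gr_adj.2 ⟨heE, fun h => hnd _ heE (by simp [h])⟩
    rcases Sym2.mem_iff.1 ha with rfl | rfl
    · intro b hb
      rcases Sym2.mem_iff.1 hb with rfl | rfl
      · exact hr
      · exact hr.trans huv.reachable
    · intro b hb
      rcases Sym2.mem_iff.1 hb with rfl | rfl
      · exact hr.trans huv.symm.reachable
      · exact hr

lemma mem_supp_clsE {E : Finset (Sym2 V)} (hnd : ∀ e ∈ E, ¬e.IsDiag) {x : V}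
    (hx : x ∈ esupp E) : x ∈ esupp (clsE E x) := by
  obtain ⟨e, he, hxe⟩ := mem_esupp.1 hx
  refine mem_esupp.2 ⟨e, ?_, hxe⟩
  rw [mem_clsE]
  refine ⟨he, ?_⟩
  induction e with
  | _ u v =>
    have huv : (gr E).Adj u v := gr_adj.2 ⟨he, fun h => hnd _ he (by simp [h])⟩
    rcases Sym2.mem_iff.1 hxe with rfl | rfl
    · intro b hb
      rcases Sym2.mem_iff.1 hb with rfl | rfl
      · exact SimpleGraph.Reachable.refl _
      · exact huv.reachable
    · intro b hb
      rcases Sym2.mem_iff.1 hb with rfl | rfl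
      · exact huv.symm.reachable
      · exact SimpleGraph.Reachable.refl _

lemma reach_clsE {E : Finset (Sym2 V)} {x z : V} (hz : (gr E).Reachable x z) :
    (gr (clsE E x)).Reachable x z := by
  apply reach_restrict _ hz
  intro e he hall
  exact mem_clsE.2 ⟨he, hall⟩

lemma supp_clsE_reach {E : Finset (Sym2 V)} {x z : V} (hz : z ∈ esupp (clsE E x)) :
    (gr (clsE E x)).Reachable x z := by
  obtain ⟨e, he, hze⟩ := mem_esupp.1 hz
  exact reach_clsE ((mem_clsE.1 he).2 z hze)

lemma ccnt_clsE {E : Finset (Sym2 V)} (hnd : ∀ e ∈ E, ¬e.IsDiag) {x : V}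
    (hx : x ∈ esupp E) : ccnt (esupp (clsE E x)) (clsE E x) = 1 := by
  have hxs : x ∈ esupp (clsE E x) := mem_supp_clsE hnd hx
  apply le_antisymm
  · rw [ccnt]
    apply Finset.card_le_one.2
    intro s hs t ht
    obtain ⟨u, hu, rfl⟩ := Finset.mem_image.1 hs
    obtain ⟨v, hv, rfl⟩ := Finset.mem_image.1 ht
    exact cls_eq_of_reach ((supp_clsE_reach hu).symm.trans (supp_clsE_reach hv))
  · rw [ccnt]
    exact Finset.card_pos.2 ⟨_, Finset.mem_image_of_mem _ hxs⟩

lemma disj_supp_clsE {E : Finset (Sym2 V)} (hnd : ∀ e ∈ E, ¬e.IsDiag) {x : V} :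
    esupp (clsE E x) ∩ esupp (E \ clsE E x) = ∅ := by
  rw [Finset.eq_empty_iff_forall_notMem]
  intro z hz
  obtain ⟨hz₁, hz₂⟩ := Finset.mem_inter.1 hz
  obtain ⟨e, he, hze⟩ := mem_esupp.1 hz₂
  have h1 : (gr E).Reachable x z := by
    obtain ⟨e', he', hze'⟩ := mem_esupp.1 hz₁
    exact (mem_clsE.1 he').2 z hze'
  exact compl_clsE hnd he z hze h1

/-! ### Transfer along injective vertex maps -/

variable {V₂ : Type*} [DecidableEq V₂]

lemma esupp_image {φ : V → V₂} (B : Finset (Sym2 V)) :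
    esupp (B.image (Sym2.map φ)) = (esupp B).image φ := by
  ext x
  simp only [mem_esupp, Finset.mem_image]
  constructor
  · rintro ⟨e, ⟨e₀, he₀, rfl⟩, hxe⟩
    obtain ⟨a, ha, rfl⟩ := Sym2.mem_map.1 hxe
    exact ⟨a, ⟨e₀, he₀, ha⟩, rfl⟩
  · rintro ⟨a, ⟨e₀, he₀, ha⟩, rfl⟩
    exact ⟨Sym2.map φ e₀, ⟨e₀, he₀, rfl⟩, Sym2.mem_map.2 ⟨a, ha, rfl⟩⟩

lemma mem_image_sym2_iff {φ : V → V₂} (hφ : Function.Injective φ) {B : Finset (Sym2 V)}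
    {a b : V} : s(φ a, φ b) ∈ B.image (Sym2.map φ) ↔ s(a, b) ∈ B := by
  constructor
  · intro h
    obtain ⟨e₀, he₀, heq⟩ := Finset.mem_image.1 h
    have : e₀ = s(a, b) := by
      have := Sym2.map.injective hφ (a₁ := e₀) (a₂ := s(a, b)) (by simpa using heq)
      exact this
    rwa [← this]
  · intro h
    exact Finset.mem_image_of_mem _ h

lemma gr_adj_image {φ : V → V₂} (hφ : Function.Injective φ) {B : Finset (Sym2 V)}
    {a b : V} : (gr (B.image (Sym2.map φ))).Adj (φ a) (φ b) ↔ (gr B).Adj a b := by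
  rw [gr_adj, gr_adj, mem_image_sym2_iff hφ]
  constructor
  · rintro ⟨h1, h2⟩; exact ⟨h1, fun h => h2 (by rw [h])⟩
  · rintro ⟨h1, h2⟩; exact ⟨h1, fun h => h2 (hφ h)⟩

lemma reach_image_of {φ : V → V₂} (hφ : Function.Injective φ) {B : Finset (Sym2 V)}
    {a b : V} (h : (gr B).Reachable a b) :
    (gr (B.image (Sym2.map φ))).Reachable (φ a) (φ b) := by
  obtain ⟨w⟩ := h
  induction w with
  | nil => exact SimpleGraph.Reachable.refl _
  | @cons u v z huv p ih =>
    exact (SimpleGraph.Adj.reachable ((gr_adj_image hφ).2 huv)).trans ih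

lemma reach_image_iff {φ : V → V₂} (hφ : Function.Injective φ) {B : Finset (Sym2 V)}
    {a b : V} : (gr (B.image (Sym2.map φ))).Reachable (φ a) (φ b) ↔ (gr B).Reachable a b := by
  refine ⟨fun h => ?_, reach_image_of hφ⟩
  obtain ⟨w⟩ := h
  have main : ∀ {u y : V₂} (w : (gr (B.image (Sym2.map φ))).Walk u y) (a b : V),
      u = φ a → y = φ b → (gr B).Reachable a b := by
    intro u y w
    induction w with
    | nil =>
      rintro a b rfl hab
      rw [hφ hab]
    | @cons u z y huz p ih =>
      rintro a b rfl rfl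
      have hmem : s(φ a, z) ∈ B.image (Sym2.map φ) := (gr_adj.1 huz).1
      obtain ⟨e₀, he₀, heq⟩ := Finset.mem_image.1 hmem
      induction e₀ with
      | _ p₁ q₁ =>
        rw [Sym2.map_pair_eq, Sym2.eq_iff] at heq
        rcases heq with ⟨h1, h2⟩ | ⟨h1, h2⟩
        · have hadj : (gr B).Adj a q₁ := by
            rw [← gr_adj_image hφ (B := B), h2]
            exact huz
          exact hadj.reachable.trans (ih q₁ b h2.symm rfl)
        · have hadj : (gr B).Adj a p₁ := by
            rw [← gr_adj_image hφ (B := B), h1]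
            exact huz
          exact hadj.reachable.trans (ih p₁ b h1.symm rfl)
  exact main w a b rfl rfl

lemma cls_image {φ : V → V₂} (hφ : Function.Injective φ) {B : Finset (Sym2 V)} {z : V}
    (hz : z ∈ esupp B) :
    cls ((esupp B).image φ) (B.image (Sym2.map φ)) (φ z) =
      (cls (esupp B) B z).image φ := by
  ext w
  simp only [cls, Finset.mem_filter, Finset.mem_image]
  constructor
  · rintro ⟨⟨u, hu, rfl⟩, hr⟩
    exact ⟨u, ⟨hu, (reach_image_iff hφ).1 hr⟩, rfl⟩
  · rintro ⟨u, ⟨hu, hr⟩, rfl⟩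
    exact ⟨⟨u, hu, rfl⟩, reach_image_of hφ hr⟩

lemma ccnt_image {φ : V → V₂} (hφ : Function.Injective φ) {B : Finset (Sym2 V)} :
    ccnt (esupp (B.image (Sym2.map φ))) (B.image (Sym2.map φ)) = ccnt (esupp B) B := by
  rw [ccnt, ccnt, esupp_image]
  rw [Finset.image_image]
  have : ∀ z ∈ esupp B,
      (cls ((esupp B).image φ) (B.image (Sym2.map φ)) ∘ φ) z =
        (Finset.image φ ∘ cls (esupp B) B) z := by
    intro z hz
    exact cls_image hφ hz
  rw [Finset.image_congr this, ← Finset.image_image]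
  exact Finset.card_image_of_injective _ (Finset.image_injective hφ)

lemma card_image_sym2 {φ : V → V₂} (hφ : Function.Injective φ) {B : Finset (Sym2 V)} :
    (B.image (Sym2.map φ)).card = B.card :=
  Finset.card_image_of_injective _ (Sym2.map.injective hφ)

lemma rkR_image {φ : V → V₂} (hφ : Function.Injective φ) {B : Finset (Sym2 V)} :
    rkR (B.image (Sym2.map φ)) = rkR B := by
  rw [rkR, rkR, ccnt_image hφ, esupp_image,
    Finset.card_image_of_injective _ hφ]

end DP

namespace DP

section Fside

variable {r : ℕ} {F : SimpleGraph (Fin r)}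

/-- Edge finset of `F`. -/
def EF (F : SimpleGraph (Fin r)) : Finset (Sym2 (Fin r)) := F.edgeSet.toFinite.toFinset

lemma mem_EF {e : Sym2 (Fin r)} : e ∈ EF F ↔ e ∈ F.edgeSet := Set.Finite.mem_toFinset _

lemma EF_card : (EF F).card = edgeCnt F :=
  (Set.ncard_eq_toFinset_card F.edgeSet F.edgeSet.toFinite).symm

lemma EF_nondiag : ∀ e ∈ EF F, ¬e.IsDiag := fun _ he =>
  SimpleGraph.not_isDiag_of_mem_edgeSet F (mem_EF.1 he)

lemma adj_EF {a b : Fin r} : s(a, b) ∈ EF F ↔ F.Adj a b := by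
  rw [mem_EF, SimpleGraph.mem_edgeSet]

lemma sym2_cases {α : Type*} (e : Sym2 α) : ∃ a b, e = s(a, b) :=
  Sym2.ind (fun a b => ⟨a, b, rfl⟩) e

lemma two_le_supp_card {B : Finset (Sym2 (Fin r))} (hB : B ⊆ EF F) (hne : B.Nonempty) :
    2 ≤ (esupp B).card := by
  obtain ⟨e, he⟩ := hne
  obtain ⟨a, b, rfl⟩ := sym2_cases e
  have hab : a ≠ b := fun h => EF_nondiag _ (hB he) (by simp [h])
  have hsub : ({a, b} : Finset (Fin r)) ⊆ esupp B := by
    intro z hz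
    rcases Finset.mem_insert.1 hz with rfl | hz
    · exact mem_esupp.2 ⟨_, he, by simp⟩
    · rw [Finset.mem_singleton.1 hz]; exact mem_esupp.2 ⟨_, he, by simp⟩
  calc 2 = ({a, b} : Finset (Fin r)).card := (Finset.card_pair hab).symm
    _ ≤ _ := Finset.card_le_card hsub

/-- The subgraph of `F` spanned by an edge subset. -/
def subOf (B : Finset (Sym2 (Fin r))) (hB : B ⊆ EF F) : F.Subgraph where
  verts := ↑(esupp B)
  Adj a b := s(a, b) ∈ B
  adj_sub h := adj_EF.1 (hB h)
  edge_vert h := by exact Finset.mem_coe.2 (mem_esupp.2 ⟨_, h, by simp⟩)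
  symm := ⟨fun a b h => by
    show s(b, a) ∈ B
    rwa [Sym2.eq_swap]⟩

lemma subOf_edgeSet {B : Finset (Sym2 (Fin r))} (hB : B ⊆ EF F) :
    (subOf B hB).edgeSet = ↑B := by
  ext e
  obtain ⟨a, b, rfl⟩ := sym2_cases e
  simp only [SimpleGraph.Subgraph.mem_edgeSet, Finset.mem_coe]
  rfl

lemma subOf_edge_ncard {B : Finset (Sym2 (Fin r))} (hB : B ⊆ EF F) :
    (subOf B hB).edgeSet.ncard = B.card := by
  rw [subOf_edgeSet, Set.ncard_coe_finset]

lemma subOf_verts_ncard {B : Finset (Sym2 (Fin r))} (hB : B ⊆ EF F) :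
    (subOf B hB).verts.ncard = (esupp B).card := by
  show (↑(esupp B) : Set (Fin r)).ncard = _
  rw [Set.ncard_coe_finset]

lemma subOf_top {B : Finset (Sym2 (Fin r))} (hB : B ⊆ EF F) (h : subOf B hB = ⊤) :
    B = EF F ∧ esupp B = Finset.univ := by
  constructor
  · have := congrArg SimpleGraph.Subgraph.edgeSet h
    rw [subOf_edgeSet, SimpleGraph.Subgraph.edgeSet_top] at this
    apply Finset.coe_injective
    rw [this]
    ext e
    rw [Finset.mem_coe, mem_EF]
  · have := congrArg SimpleGraph.Subgraph.verts h
    have h2 : (↑(esupp B) : Set (Fin r)) = Set.univ := this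
    apply Finset.coe_injective
    rw [h2]
    simp

lemma d1_nonneg (hr : 3 ≤ r) : 0 ≤ d1 F := by
  rw [d1]
  apply div_nonneg (by positivity)
  have : (3 : ℝ) ≤ (r : ℝ) := by exact_mod_cast hr
  linarith

/-- Core strict bound for pieces which are proper. -/
lemma piece_margin (hF : Strictly1Balanced F) (hr : 3 ≤ r)
    {B : Finset (Sym2 (Fin r))} (hB : B ⊆ EF F) (hne : B.Nonempty) (hnf : B ≠ EF F) :
    (B.card : ℝ) + 1 / ((r : ℝ) - 1) ≤ d1 F * (((esupp B).card : ℝ) - 1) := by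
  have hrr : (3 : ℝ) ≤ (r : ℝ) := by exact_mod_cast hr
  have hST : subOf B hB ≠ ⊤ := fun h => hnf (subOf_top hB h).1
  have h2v : 2 ≤ (subOf B hB).verts.ncard := by
    rw [subOf_verts_ncard]; exact two_le_supp_card hB hne
  have h1e : 1 ≤ (subOf B hB).edgeSet.ncard := by
    rw [subOf_edge_ncard]; exact Finset.card_pos.2 hne
  have hlt := hF _ hST h2v h1e
  rw [subOf_edge_ncard, subOf_verts_ncard] at hlt
  set s := (esupp B).card with hs
  have hs2 : 2 ≤ s := two_le_supp_card hB hne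
  have hs2' : (2 : ℝ) ≤ (s : ℝ) := by exact_mod_cast hs2
  have hspos : (0 : ℝ) < (s : ℝ) - 1 := by linarith
  have hrpos : (0 : ℝ) < (r : ℝ) - 1 := by linarith
  rw [d1, div_lt_div_iff₀ hspos hrpos] at hlt
  have hltN : B.card * (r - 1) < edgeCnt F * (s - 1) := by
    have h1r : 1 ≤ r := by omega
    have h1s : 1 ≤ s := by omega
    have : ((B.card * (r - 1) : ℕ) : ℝ) < ((edgeCnt F * (s - 1) : ℕ) : ℝ) := by
      push_cast [Nat.cast_sub h1r, Nat.cast_sub h1s]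
      convert hlt using 2 <;> push_cast <;> ring
    exact_mod_cast this
  have hleN : B.card * (r - 1) + 1 ≤ edgeCnt F * (s - 1) := hltN
  have hleR : (B.card : ℝ) * ((r : ℝ) - 1) + 1 ≤ (edgeCnt F : ℝ) * ((s : ℝ) - 1) := by
    have h1r : 1 ≤ r := by omega
    have h1s : 1 ≤ s := by omega
    have : ((B.card * (r - 1) + 1 : ℕ) : ℝ) ≤ ((edgeCnt F * (s - 1) : ℕ) : ℝ) := by
      exact_mod_cast hleN
    push_cast [Nat.cast_sub h1r, Nat.cast_sub h1s] at this
    linarith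
  rw [d1, div_mul_eq_mul_div, le_div_iff₀ hrpos]
  have expand : ((B.card : ℝ) + 1 / ((r:ℝ) - 1)) * ((r:ℝ) - 1) =
      (B.card : ℝ) * ((r:ℝ) - 1) + 1 := by
    field_simp
  rw [expand]
  linarith

/-- Any nonempty edge subset obeys the weak density bound. -/
lemma piece_le (hF : Strictly1Balanced F) (hr : 3 ≤ r)
    {B : Finset (Sym2 (Fin r))} (hB : B ⊆ EF F) (hne : B.Nonempty) :
    (B.card : ℝ) ≤ d1 F * (((esupp B).card : ℝ) - 1) := by
  by_cases hnf : B = EF F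
  · by_cases hST : subOf B hB = ⊤
    · obtain ⟨hBf, hsu⟩ := subOf_top hB hST
      have hrpos : (0 : ℝ) < (r : ℝ) - 1 := by
        have : (3:ℝ) ≤ (r:ℝ) := by exact_mod_cast hr
        linarith
      have hd : d1 F * ((r:ℝ) - 1) = (edgeCnt F : ℝ) := by
        rw [d1]; field_simp
      have hc : B.card = edgeCnt F := by rw [hBf, EF_card]
      rw [hsu, hc, Finset.card_univ, Fintype.card_fin]
      linarith
    · have h2v : 2 ≤ (subOf B hB).verts.ncard := by
        rw [subOf_verts_ncard]; exact two_le_supp_card hB hne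
      have h1e : 1 ≤ (subOf B hB).edgeSet.ncard := by
        rw [subOf_edge_ncard]; exact Finset.card_pos.2 hne
      have hlt := hF _ hST h2v h1e
      rw [subOf_edge_ncard, subOf_verts_ncard] at hlt
      have hs2 : 2 ≤ (esupp B).card := two_le_supp_card hB hne
      have hs2' : (2:ℝ) ≤ ((esupp B).card : ℝ) := by exact_mod_cast hs2
      have hspos : (0 : ℝ) < ((esupp B).card : ℝ) - 1 := by linarith
      rw [div_lt_iff₀ hspos] at hlt
      linarith [hlt]
  · have := piece_margin hF hr hB hne hnf
    have hrpos : (0 : ℝ) < (r : ℝ) - 1 := by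
      have : (3:ℝ) ≤ (r:ℝ) := by exact_mod_cast hr
      linarith
    have : (0:ℝ) < 1 / ((r:ℝ)-1) := by positivity
    linarith [piece_margin hF hr hB hne hnf]

/-- Variant: piece avoiding a designated edge of `F` but joining its endpoints. -/
lemma piece_xy (hF : Strictly1Balanced F) (hr : 3 ≤ r)
    {B : Finset (Sym2 (Fin r))} (hB : B ⊆ EF F) {x y : Fin r} (hxy : x ≠ y)
    (hexy : s(x, y) ∈ EF F) (hnot : s(x, y) ∉ B)
    (hx : x ∈ esupp B) (hy : y ∈ esupp B) :
    (B.card : ℝ) + 1 ≤ d1 F * (((esupp B).card : ℝ) - 1) := by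
  set Bp := insert s(x, y) B with hBp
  have hBp_sub : Bp ⊆ EF F := Finset.insert_subset hexy hB
  have hBp_ne : Bp.Nonempty := Finset.insert_nonempty _ _
  have hsupp : esupp Bp = esupp B := by
    apply Finset.Subset.antisymm
    · intro z hz
      obtain ⟨e, he, hze⟩ := mem_esupp.1 hz
      rcases Finset.mem_insert.1 he with rfl | he
      · rcases Sym2.mem_iff.1 hze with rfl | rfl
        · exact hx
        · exact hy
      · exact mem_esupp.2 ⟨e, he, hze⟩
    · exact esupp_mono (Finset.subset_insert _ _)
  have hcard : Bp.card = B.card + 1 := Finset.card_insert_of_notMem hnot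
  have hrpos : (0 : ℝ) < (r : ℝ) - 1 := by
    have : (3:ℝ) ≤ (r:ℝ) := by exact_mod_cast hr
    linarith
  have := piece_le hF hr hBp_sub hBp_ne
  rw [hcard, hsupp] at this
  push_cast at this
  linarith

/-- Key split facts bundled. -/
lemma split_facts {B : Finset (Sym2 (Fin r))} (hB : B ⊆ EF F) {x : Fin r}
    (hx : x ∈ esupp B) :
    clsE B x ∪ (B \ clsE B x) = B ∧
    (clsE B x).card + (B \ clsE B x).card = B.card ∧
    (clsE B x).Nonempty ∧ (B \ clsE B x) ⊂ B ∧
    rkR (clsE B x) + rkR (B \ clsE B x) ≤ rkR B ∧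
    rkR (clsE B x) = ((esupp (clsE B x)).card : ℝ) - 1 := by
  have hnd : ∀ e ∈ B, ¬e.IsDiag := fun e he => EF_nondiag e (hB he)
  have hun : clsE B x ∪ (B \ clsE B x) = B := Finset.union_sdiff_of_subset clsE_subset
  have hxs : x ∈ esupp (clsE B x) := mem_supp_clsE hnd hx
  have hne : (clsE B x).Nonempty := by
    obtain ⟨e, he, _⟩ := mem_esupp.1 hxs
    exact ⟨e, he⟩
  have hcard : (clsE B x).card + (B \ clsE B x).card = B.card := by
    have := Finset.card_sdiff_add_card_eq_card (clsE_subset (E := B) (x := x))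
    omega
  have hdisj : esupp (clsE B x) ∩ esupp (B \ clsE B x) = ∅ := disj_supp_clsE hnd
  have hrk : rkR (clsE B x) + rkR (B \ clsE B x) ≤ rkR B := by
    have := rkR_union_ge₁ (E₁ := clsE B x) (E₂ := B \ clsE B x)
      (by rw [hdisj]; simp)
    rwa [hun] at this
  have hsub : (B \ clsE B x) ⊂ B := by
    refine Finset.ssubset_iff_of_subset (Finset.sdiff_subset) |>.2 ?_
    obtain ⟨e, he⟩ := hne
    exact ⟨e, clsE_subset he, by simp [Finset.mem_sdiff, he]⟩
  have hrk1 : rkR (clsE B x) = ((esupp (clsE B x)).card : ℝ) - 1 := by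
    rw [rkR, ccnt_clsE hnd hx]
    push_cast
    ring
  exact ⟨hun, hcard, hne, hsub, hrk, hrk1⟩

/-- Weak rank bound for any edge subset of `F`. -/
lemma B1a (hF : Strictly1Balanced F) (hr : 3 ≤ r) :
    ∀ B : Finset (Sym2 (Fin r)), B ⊆ EF F → (B.card : ℝ) ≤ d1 F * rkR B := by
  intro B
  induction B using Finset.strongInduction with
  | _ B ih =>
    intro hB
    rcases B.eq_empty_or_nonempty with rfl | hne
    · simp
    obtain ⟨e, he⟩ := hne
    obtain ⟨a, b, rfl⟩ := sym2_cases e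
    have hx : a ∈ esupp B := mem_esupp.2 ⟨_, he, by simp⟩
    obtain ⟨hun, hcard, hne₁, hsub, hrk, hrk1⟩ := split_facts hB hx
    have h1 : ((clsE B a).card : ℝ) ≤ d1 F * rkR (clsE B a) := by
      rw [hrk1]
      exact piece_le hF hr (clsE_subset.trans hB) hne₁
    have h2 : (((B \ clsE B a)).card : ℝ) ≤ d1 F * rkR (B \ clsE B a) :=
      ih _ hsub (Finset.sdiff_subset.trans hB)
    have hd := d1_nonneg (F := F) hr
    have hcR : ((clsE B a).card : ℝ) + ((B \ clsE B a).card : ℝ) = (B.card : ℝ) := by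
      exact_mod_cast hcard
    nlinarith [hrk]

/-- Rank bound with margin, for proper nonempty subsets. -/
lemma B1b (hF : Strictly1Balanced F) (hr : 3 ≤ r)
    {B : Finset (Sym2 (Fin r))} (hB : B ⊆ EF F) (hne : B.Nonempty) (hnf : B ≠ EF F) :
    (B.card : ℝ) + 1 / ((r : ℝ) - 1) ≤ d1 F * rkR B := by
  obtain ⟨e, he⟩ := hne
  obtain ⟨a, b, rfl⟩ := sym2_cases e
  have hx : a ∈ esupp B := mem_esupp.2 ⟨_, he, by simp⟩
  obtain ⟨hun, hcard, hne₁, hsub, hrk, hrk1⟩ := split_facts hB hx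
  have hnf₁ : clsE B a ≠ EF F := by
    intro h
    apply hnf
    apply Finset.Subset.antisymm hB
    rw [← h]
    exact clsE_subset.trans (le_refl B)
  have h1 : ((clsE B a).card : ℝ) + 1 / ((r : ℝ) - 1) ≤ d1 F * rkR (clsE B a) := by
    rw [hrk1]
    exact piece_margin hF hr (clsE_subset.trans hB) hne₁ hnf₁
  have h2 : (((B \ clsE B a)).card : ℝ) ≤ d1 F * rkR (B \ clsE B a) :=
    B1a hF hr _ (Finset.sdiff_subset.trans hB)
  have hd := d1_nonneg (F := F) hr
  have hcR : ((clsE B a).card : ℝ) + ((B \ clsE B a).card : ℝ) = (B.card : ℝ) := by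
    exact_mod_cast hcard
  nlinarith [hrk]

/-- Rank bound with margin 1, when the designated absent edge's endpoints are joined. -/
lemma B2 (hF : Strictly1Balanced F) (hr : 3 ≤ r)
    {B : Finset (Sym2 (Fin r))} (hB : B ⊆ EF F) {x y : Fin r} (hxy : x ≠ y)
    (hexy : s(x, y) ∈ EF F) (hnot : s(x, y) ∉ B)
    (hreach : (gr B).Reachable x y) :
    (B.card : ℝ) + 1 ≤ d1 F * rkR B := by
  obtain ⟨hxs, hys⟩ := mem_esupp_of_reach_ne hreach hxy
  obtain ⟨hun, hcard, hne₁, hsub, hrk, hrk1⟩ := split_facts hB hxs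
  -- y lies in the support of the class piece of x
  have hysc : y ∈ esupp (clsE B x) := by
    obtain ⟨e, he, hye⟩ := mem_esupp.1 hys
    refine mem_esupp.2 ⟨e, ?_, hye⟩
    rw [mem_clsE]
    refine ⟨he, ?_⟩
    obtain ⟨u, v, rfl⟩ := sym2_cases e
    have hnd : ∀ e ∈ B, ¬e.IsDiag := fun e he' => EF_nondiag e (hB he')
    have huv : (gr B).Adj u v := gr_adj.2 ⟨he, fun h => hnd _ he (by simp [h])⟩
    rcases Sym2.mem_iff.1 hye with rfl | rfl
    · intro c hc
      rcases Sym2.mem_iff.1 hc with rfl | rfl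
      · exact hreach
      · exact hreach.trans huv.reachable
    · intro c hc
      rcases Sym2.mem_iff.1 hc with rfl | rfl
      · exact hreach.trans huv.symm.reachable
      · exact hreach
  have hxsc : x ∈ esupp (clsE B x) :=
    mem_supp_clsE (fun e he' => EF_nondiag e (hB he')) hxs
  have hnot₁ : s(x, y) ∉ clsE B x := fun h => hnot (clsE_subset h)
  have h1 : ((clsE B x).card : ℝ) + 1 ≤ d1 F * rkR (clsE B x) := by
    rw [hrk1]
    exact piece_xy hF hr (clsE_subset.trans hB) hxy hexy hnot₁ hxsc hysc
  have h2 : (((B \ clsE B x)).card : ℝ) ≤ d1 F * rkR (B \ clsE B x) :=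
    B1a hF hr _ (Finset.sdiff_subset.trans hB)
  have hd := d1_nonneg (F := F) hr
  have hcR : ((clsE B x).card : ℝ) + ((B \ clsE B x).card : ℝ) = (B.card : ℝ) := by
    exact_mod_cast hcard
  nlinarith [hrk]

/-- `d₁(F) > 1` when `F` has an edge. -/
lemma one_lt_d1 (hF : Strictly1Balanced F) (hr : 3 ≤ r) (hE : (EF F).Nonempty) :
    1 < d1 F := by
  obtain ⟨e, he⟩ := hE
  obtain ⟨a, b, rfl⟩ := sym2_cases e
  have hadj : F.Adj a b := adj_EF.1 he
  set S := SimpleGraph.subgraphOfAdj F hadj with hS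
  have hST : S ≠ ⊤ := by
    intro h
    have hv := congrArg SimpleGraph.Subgraph.verts h
    rw [SimpleGraph.subgraphOfAdj_verts] at hv
    have h3 : ({a, b} : Set (Fin r)).ncard = (⊤ : F.Subgraph).verts.ncard := by rw [hv]
    rw [Set.ncard_pair hadj.ne] at h3
    have : (⊤ : F.Subgraph).verts.ncard = r := by
      show (Set.univ : Set (Fin r)).ncard = r
      simp [Set.ncard_univ]
    omega
  have h2v : 2 ≤ S.verts.ncard := by
    rw [hS, SimpleGraph.subgraphOfAdj_verts, Set.ncard_pair hadj.ne]
  have h1e : 1 ≤ S.edgeSet.ncard := by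
    rw [hS, SimpleGraph.edgeSet_subgraphOfAdj]
    simp
  have := hF S hST h2v h1e
  rw [hS, SimpleGraph.edgeSet_subgraphOfAdj, SimpleGraph.subgraphOfAdj_verts,
    Set.ncard_singleton, Set.ncard_pair hadj.ne] at this
  norm_num at this
  exact this

end Fside

section Vside

variable {V : Type*} [DecidableEq V] {r : ℕ} {F : SimpleGraph (Fin r)}

lemma copy_basic {hE : FEdge V} (hcopy : FEdge.IsCopyOf hE F) :
    ∃ φ : Fin r → V, Function.Injective φ ∧ (↑hE.1 : Set V) = Set.range φ ∧
      hE.2 = (EF F).image (Sym2.map φ) := by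
  obtain ⟨φ, hinj, hv, he⟩ := hcopy
  refine ⟨φ, hinj, hv, ?_⟩
  apply Finset.coe_injective
  have hES : F.edgeSet = ↑(EF F) := by
    ext e; simp [mem_EF]
  rw [he, Finset.coe_image, hES]

lemma copy_nondiag {hE : FEdge V} (hcopy : FEdge.IsCopyOf hE F) :
    ∀ e ∈ hE.2, ¬e.IsDiag := by
  obtain ⟨φ, hinj, hv, he2⟩ := copy_basic hcopy
  intro e he hd
  rw [he2] at he
  obtain ⟨e₀, he₀, rfl⟩ := Finset.mem_image.1 he
  obtain ⟨a, b, rfl⟩ := sym2_cases e₀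
  have hab : a ≠ b := fun h => EF_nondiag _ he₀ (by simp [h])
  rw [Sym2.map_pair_eq] at hd
  exact hab (hinj (Sym2.isDiag_iff_proj_eq |>.1 hd))

lemma copy_endpoints {hE : FEdge V} (hcopy : FEdge.IsCopyOf hE F) :
    ∀ e ∈ hE.2, ∀ a ∈ e, a ∈ hE.1 := by
  obtain ⟨φ, hinj, hv, he2⟩ := copy_basic hcopy
  intro e he a ha
  rw [he2] at he
  obtain ⟨e₀, he₀, rfl⟩ := Finset.mem_image.1 he
  obtain ⟨a₀, ha₀, rfl⟩ := Sym2.mem_map.1 ha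
  have : φ a₀ ∈ (↑hE.1 : Set V) := by
    rw [hv]; exact Set.mem_range_self _
  exact Finset.mem_coe.1 this

lemma copy_supp_sub {hE : FEdge V} (hcopy : FEdge.IsCopyOf hE F)
    {u : Finset (Sym2 V)} (hu : u ⊆ hE.2) : esupp u ⊆ hE.1 := by
  intro z hz
  obtain ⟨e, he, hze⟩ := mem_esupp.1 hz
  exact copy_endpoints hcopy e (hu he) z hze

/-- Pullback description of `U' ∩ hE.2`. -/
lemma copy_pullback {hE : FEdge V} {φ : Fin r → V} (hinj : Function.Injective φ)
    (he2 : hE.2 = (EF F).image (Sym2.map φ)) (U' : Finset (Sym2 V)) :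
    U' ∩ hE.2 = ((EF F).filter fun e => Sym2.map φ e ∈ U').image (Sym2.map φ) := by
  ext e
  simp only [Finset.mem_inter, he2, Finset.mem_image, Finset.mem_filter]
  constructor
  · rintro ⟨hU, e₀, he₀, rfl⟩
    exact ⟨e₀, ⟨he₀, hU⟩, rfl⟩
  · rintro ⟨e₀, ⟨he₀, hU⟩, rfl⟩
    exact ⟨hU, e₀, he₀, rfl⟩

lemma copy_card_le (hF : Strictly1Balanced F) (hr : 3 ≤ r) {hE : FEdge V}
    (hcopy : FEdge.IsCopyOf hE F) (U' : Finset (Sym2 V)) :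
    ((U' ∩ hE.2).card : ℝ) ≤ d1 F * rkR (U' ∩ hE.2) := by
  obtain ⟨φ, hinj, hv, he2⟩ := copy_basic hcopy
  rw [copy_pullback hinj he2 U']
  rw [card_image_sym2 hinj, rkR_image hinj]
  exact B1a hF hr _ (Finset.filter_subset _ _)

lemma copy_card_margin (hF : Strictly1Balanced F) (hr : 3 ≤ r) {hE : FEdge V}
    (hcopy : FEdge.IsCopyOf hE F) (U' : Finset (Sym2 V))
    (hne : (U' ∩ hE.2).Nonempty) (hnf : U' ∩ hE.2 ≠ hE.2) :
    ((U' ∩ hE.2).card : ℝ) + 1 / ((r : ℝ) - 1) ≤ d1 F * rkR (U' ∩ hE.2) := by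
  obtain ⟨φ, hinj, hv, he2⟩ := copy_basic hcopy
  have hpb := copy_pullback hinj he2 U'
  rw [hpb, card_image_sym2 hinj, rkR_image hinj]
  apply B1b hF hr (Finset.filter_subset _ _)
  · have := hne
    rw [hpb, Finset.image_nonempty] at this
    exact this
  · intro h
    apply hnf
    rw [hpb, h, ← he2]

lemma copy_card_xy (hF : Strictly1Balanced F) (hr : 3 ≤ r) {hE : FEdge V}
    (hcopy : FEdge.IsCopyOf hE F) (U' : Finset (Sym2 V)) {x y : V}
    (hxy : x ≠ y) (hexy : s(x, y) ∈ hE.2) (hnot : s(x, y) ∉ U')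
    (hreach : (gr (U' ∩ hE.2)).Reachable x y) :
    ((U' ∩ hE.2).card : ℝ) + 1 ≤ d1 F * rkR (U' ∩ hE.2) := by
  obtain ⟨φ, hinj, hv, he2⟩ := copy_basic hcopy
  have hpb := copy_pullback hinj he2 U'
  -- find preimages of x and y
  have hx1 : x ∈ hE.1 := copy_endpoints hcopy _ hexy x (by simp)
  have hy1 : y ∈ hE.1 := copy_endpoints hcopy _ hexy y (by simp)
  have hx2 : x ∈ Set.range φ := by rw [← hv]; exact Finset.mem_coe.2 hx1
  have hy2 : y ∈ Set.range φ := by rw [← hv]; exact Finset.mem_coe.2 hy1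
  obtain ⟨x₀, rfl⟩ := hx2
  obtain ⟨y₀, rfl⟩ := hy2
  have hxy₀ : x₀ ≠ y₀ := fun h => hxy (by rw [h])
  set P := (EF F).filter (fun e => Sym2.map φ e ∈ U') with hP
  have hexy₀ : s(x₀, y₀) ∈ EF F := by
    rw [he2] at hexy
    have : s(φ x₀, φ y₀) = Sym2.map φ s(x₀, y₀) := by rw [Sym2.map_pair_eq]
    rw [this] at hexy
    obtain ⟨e₀, he₀, heq⟩ := Finset.mem_image.1 hexy
    rwa [Sym2.map.injective hinj heq] at he₀
  have hnot₀ : s(x₀, y₀) ∉ P := by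
    intro h
    rw [hP, Finset.mem_filter, Sym2.map_pair_eq] at h
    exact hnot h.2
  have hreach₀ : (gr P).Reachable x₀ y₀ := by
    rw [hpb] at hreach
    exact (reach_image_iff hinj).1 hreach
  rw [hpb, card_image_sym2 hinj, rkR_image hinj]
  exact B2 hF hr (Finset.filter_subset _ _) hxy₀ hexy₀ hnot₀ hreach₀

lemma esupp_biUnion_sub {V : Type*} [DecidableEq V] {ι : Type*} [DecidableEq ι]
    (s : Finset ι) (u : ι → Finset (Sym2 V)) :
    esupp (s.biUnion u) ⊆ s.biUnion fun i => esupp (u i) := by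
  intro z hz
  obtain ⟨e, he, hze⟩ := mem_esupp.1 hz
  obtain ⟨i, hi, hei⟩ := Finset.mem_biUnion.1 he
  exact Finset.mem_biUnion.2 ⟨i, hi, mem_esupp.2 ⟨e, hei, hze⟩⟩

/-- Bridge from `rkR` to the connected-component count in the theorem statement. -/
lemma final_bridge {V : Type*} [DecidableEq V] {W : Finset V} {U' : Finset (Sym2 V)}
    (hW : esupp U' ⊆ W) :
    rkR U' ≤ (W.card : ℝ) -
      (Nat.card ((SimpleGraph.fromEdgeSet (↑U' : Set (Sym2 V))).induce
        (↑W : Set V)).ConnectedComponent : ℝ) := by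
  have h1 : Nat.card ((SimpleGraph.fromEdgeSet (↑U' : Set (Sym2 V))).induce
      (↑W : Set V)).ConnectedComponent ≤ ccnt W U' := ncomp_le_ccnt hW
  have h2 : ccnt W U' ≤ ccnt (esupp U') U' + (W.card - (esupp U').card) :=
    ccnt_le_ccnt_esupp_add hW
  have h3 : (esupp U').card ≤ W.card := Finset.card_le_card hW
  have h4 : Nat.card ((SimpleGraph.fromEdgeSet (↑U' : Set (Sym2 V))).induce
      (↑W : Set V)).ConnectedComponent + (esupp U').card ≤
      ccnt (esupp U') U' + W.card := by omega
  have h5 : (Nat.card ((SimpleGraph.fromEdgeSet (↑U' : Set (Sym2 V))).induce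
      (↑W : Set V)).ConnectedComponent : ℝ) + ((esupp U').card : ℝ) ≤
      (ccnt (esupp U') U' : ℝ) + (W.card : ℝ) := by exact_mod_cast h4
  rw [rkR]
  linarith

/-- Chain bound: ranks add along a path-like family with small consecutive overlaps. -/
lemma chain_rkR {V : Type*} [DecidableEq V] {k : ℕ} (u : Fin k → Finset (Sym2 V))
    (S : Fin k → Finset V) (hsupp : ∀ i, esupp (u i) ⊆ S i)
    (m : ℕ) (hm : m ≤ k)
    (hover : ∀ i : Fin k, (i : ℕ) < m → ∃ w : V,
      ∀ a : Fin k, (a : ℕ) < (i : ℕ) → S a ∩ S i ⊆ {w}) :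
    ∑ i ∈ Finset.univ.filter (fun i : Fin k => (i : ℕ) < m), rkR (u i) ≤
      rkR ((Finset.univ.filter (fun i : Fin k => (i : ℕ) < m)).biUnion u) := by
  induction m with
  | zero => simp
  | succ m ih =>
    have hm' : m ≤ k := by omega
    by_cases hmk : m < k
    · -- split off index m
      set im : Fin k := ⟨m, hmk⟩ with him
      have hset : Finset.univ.filter (fun i : Fin k => (i : ℕ) < m + 1) =
          insert im (Finset.univ.filter (fun i : Fin k => (i : ℕ) < m)) := by
        ext i
        simp only [Finset.mem_filter, Finset.mem_univ, true_and, Finset.mem_insert]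
        constructor
        · intro hi
          by_cases h : (i : ℕ) < m
          · exact Or.inr (by simp [h])
          · left
            apply Fin.ext
            simp only [him]
            omega
        · rintro (rfl | hi)
          · exact Nat.lt_succ_self m
          · omega
      have hnotmem : im ∉ Finset.univ.filter (fun i : Fin k => (i : ℕ) < m) := by
        simp [him]
      rw [hset, Finset.sum_insert hnotmem, Finset.biUnion_insert]
      have hover' : ∀ i : Fin k, (i : ℕ) < m → ∃ w : V,
          ∀ a : Fin k, (a : ℕ) < (i : ℕ) → S a ∩ S i ⊆ {w} := fun i hi =>
        hover i (by omega)
      have hIH := ih hm' hover'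
      obtain ⟨w, hw⟩ := hover im (by simp [him])
      -- overlap of prefix with u im is inside {w}
      have hT : esupp ((Finset.univ.filter (fun i : Fin k => (i : ℕ) < m)).biUnion u) ∩
          esupp (u im) ⊆ {w} := by
        intro z hz
        obtain ⟨hz1, hz2⟩ := Finset.mem_inter.1 hz
        obtain ⟨a, ha, hza⟩ := Finset.mem_biUnion.1 (esupp_biUnion_sub _ _ hz1)
        simp only [Finset.mem_filter, Finset.mem_univ, true_and] at ha
        have : z ∈ S a ∩ S im := Finset.mem_inter.2 ⟨hsupp a hza, hsupp im hz2⟩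
        exact hw a (by simpa [him] using ha) this
      have hcard : (esupp ((Finset.univ.filter (fun i : Fin k => (i : ℕ) < m)).biUnion u) ∩
          esupp (u im)).card ≤ 1 := by
        calc _ ≤ ({w} : Finset V).card := Finset.card_le_card hT
          _ = 1 := Finset.card_singleton w
      have := rkR_union_ge₁ hcard
      rw [Finset.union_comm] at this
      linarith
    · -- m ≥ k: filter sets agree
      have : Finset.univ.filter (fun i : Fin k => (i : ℕ) < m + 1) =
          Finset.univ.filter (fun i : Fin k => (i : ℕ) < m) := by
        ext i
        have := i.2
        simp only [Finset.mem_filter, Finset.mem_univ, true_and]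
        omega
      rw [this]
      exact ih hm' fun i hi => hover i (by omega)

/-- Main bound for clean cycles of length 2 (dense and sparse unified). -/
lemma main_k2 (hF : Strictly1Balanced F) (hr : 3 ≤ r) (hd1 : 1 < d1 F)
    {h₁ h₂ : FEdge V} (hc₁ : FEdge.IsCopyOf h₁ F) (hc₂ : FEdge.IsCopyOf h₂ F)
    {x y : V} (hxy : x ≠ y) (hpair : h₁.1 ∩ h₂.1 = {x, y})
    {U' : Finset (Sym2 V)} (hU : U' ⊆ h₁.2 ∪ h₂.2)
    {Dc : ℕ} (hD1 : Dc ≤ 1)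
    (hspi : 1 ≤ Dc → s(x, y) ∈ h₁.2 ∧ s(x, y) ∈ h₂.2)
    (hfull : U' ∩ h₁.2 = h₁.2 → U' ∩ h₂.2 = h₂.2 →
      Dc = 0 ∧ s(x, y) ∈ h₁.2 ∧ s(x, y) ∈ h₂.2) :
    (U'.card : ℝ) + (Dc : ℝ) < d1 F * (rkR U' + 1) := by
  have hd0 : 0 ≤ d1 F := d1_nonneg hr
  set d := d1 F with hd
  set u₁ := U' ∩ h₁.2 with hu₁
  set u₂ := U' ∩ h₂.2 with hu₂
  have hUu : U' = u₁ ∪ u₂ := by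
    rw [hu₁, hu₂, ← Finset.inter_union_distrib_left]
    exact (Finset.inter_eq_left.2 hU).symm
  have hs₁ : esupp u₁ ⊆ h₁.1 := copy_supp_sub hc₁ Finset.inter_subset_right
  have hs₂ : esupp u₂ ⊆ h₂.1 := copy_supp_sub hc₂ Finset.inter_subset_right
  have hT : esupp u₁ ∩ esupp u₂ ⊆ {x, y} := by
    rw [← hpair]
    exact Finset.inter_subset_inter hs₁ hs₂
  have hTcard : (esupp u₁ ∩ esupp u₂).card ≤ 2 := by
    calc _ ≤ ({x, y} : Finset V).card := Finset.card_le_card hT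
      _ = 2 := Finset.card_pair hxy
  have hR1 : (u₁.card : ℝ) ≤ d * rkR u₁ := copy_card_le hF hr hc₁ U'
  have hR2 : (u₂.card : ℝ) ≤ d * rkR u₂ := copy_card_le hF hr hc₂ U'
  have hUcard : (U'.card : ℝ) ≤ (u₁.card : ℝ) + (u₂.card : ℝ) := by
    rw [hUu]
    exact_mod_cast Finset.card_union_le u₁ u₂
  have hRU2 : rkR u₁ + rkR u₂ - 1 ≤ rkR U' := by
    rw [hUu]; exact rkR_union_ge₂ hTcard
  have hmul2 : d * (rkR u₁ + rkR u₂) ≤ d * (rkR U' + 1) :=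
    mul_le_mul_of_nonneg_left (by linarith) hd0
  have hDcR : (Dc : ℝ) ≤ 1 := by exact_mod_cast hD1
  -- the "no rank loss" conclusion
  have noloss : rkR u₁ + rkR u₂ ≤ rkR U' →
      (U'.card : ℝ) + (Dc : ℝ) < d * (rkR U' + 1) := by
    intro hRU
    have hmul : d * (rkR u₁ + rkR u₂) ≤ d * rkR U' :=
      mul_le_mul_of_nonneg_left hRU hd0
    linarith
  by_cases hT1 : (esupp u₁ ∩ esupp u₂).card ≤ 1
  · exact noloss (by rw [hUu]; exact rkR_union_ge₁ hT1)
  · -- overlap is exactly {x, y}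
    have hTeq : esupp u₁ ∩ esupp u₂ = {x, y} := by
      apply Finset.eq_of_subset_of_card_le hT
      rw [Finset.card_pair hxy]
      omega
    have hx1 : x ∈ esupp u₁ := (Finset.mem_inter.1 (hTeq ▸ (by simp : x ∈ ({x, y} : Finset V)))).1
    have hx2 : x ∈ esupp u₂ := (Finset.mem_inter.1 (hTeq ▸ (by simp : x ∈ ({x, y} : Finset V)))).2
    have hy1 : y ∈ esupp u₁ := (Finset.mem_inter.1 (hTeq ▸ (by simp : y ∈ ({x, y} : Finset V)))).1
    have hy2 : y ∈ esupp u₂ := (Finset.mem_inter.1 (hTeq ▸ (by simp : y ∈ ({x, y} : Finset V)))).2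
    by_cases hreach₁ : (gr u₁).Reachable x y
    · by_cases hreach₂ : (gr u₂).Reachable x y
      · -- both sides join x and y
        have hne₁ : u₁.Nonempty := by
          obtain ⟨e, he, _⟩ := mem_esupp.1 hx1
          exact ⟨e, he⟩
        have hne₂ : u₂.Nonempty := by
          obtain ⟨e, he, _⟩ := mem_esupp.1 hx2
          exact ⟨e, he⟩
        -- margin from a non-full piece
        have margin_total : (u₁ ≠ h₁.2 ∨ u₂ ≠ h₂.2) →
            (U'.card : ℝ) ≤ d * (rkR u₁ + rkR u₂) - 1 / ((r : ℝ) - 1) := by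
          rintro (hnf | hnf)
          · have := copy_card_margin hF hr hc₁ U' hne₁ hnf
            linarith
          · have := copy_card_margin hF hr hc₂ U' hne₂ hnf
            linarith
        have hrpos : (0 : ℝ) < 1 / ((r : ℝ) - 1) := by
          have : (3 : ℝ) ≤ (r : ℝ) := by exact_mod_cast hr
          exact one_div_pos.2 (by linarith)
        -- dedup bound when the overlap edge is present in U'
        have dedup : s(x, y) ∈ h₁.2 → s(x, y) ∈ h₂.2 → s(x, y) ∈ U' →
            (U'.card : ℝ) + 1 ≤ (u₁.card : ℝ) + (u₂.card : ℝ) := by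
          intro he₁ he₂ heU
          have hmem : s(x, y) ∈ u₁ ∩ u₂ := by
            rw [hu₁, hu₂]
            exact Finset.mem_inter.2 ⟨Finset.mem_inter.2 ⟨heU, he₁⟩,
              Finset.mem_inter.2 ⟨heU, he₂⟩⟩
          have h1 : 1 ≤ (u₁ ∩ u₂).card := Finset.card_pos.2 ⟨_, hmem⟩
          have h2 := Finset.card_union_add_card_inter u₁ u₂
          have : U'.card + 1 ≤ u₁.card + u₂.card := by
            rw [hUu]
            omega
          exact_mod_cast this
        by_cases hDc : 1 ≤ Dc
        · obtain ⟨he₁, he₂⟩ := hspi hDc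
          by_cases hxyU : s(x, y) ∈ U'
          · -- both-full is impossible here since Dc ≥ 1
            have hnf : u₁ ≠ h₁.2 ∨ u₂ ≠ h₂.2 := by
              by_contra hcon
              push_neg at hcon
              have := (hfull hcon.1 hcon.2).1
              omega
            have hm := margin_total hnf
            have hdd := dedup he₁ he₂ hxyU
            -- recompute margin with dedup
            rcases hnf with hnf | hnf
            · have hmg := copy_card_margin hF hr hc₁ U' hne₁ hnf
              linarith
            · have hmg := copy_card_margin hF hr hc₂ U' hne₂ hnf
              linarith
          · -- xy-margin on both sides
            have hxy₁ : s(x, y) ∉ U' := hxyU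
            have hA := copy_card_xy hF hr hc₁ U' hxy he₁ hxy₁ hreach₁
            have hB := copy_card_xy hF hr hc₂ U' hxy he₂ hxy₁ hreach₂
            linarith
        · -- no dummy edge
          have hDc0 : (Dc : ℝ) = 0 := by
            have : Dc = 0 := by omega
            exact_mod_cast this
          by_cases hfull₁ : u₁ = h₁.2
          · by_cases hfull₂ : u₂ = h₂.2
            · obtain ⟨_, he₁, he₂⟩ := hfull hfull₁ hfull₂
              have hxyU : s(x, y) ∈ U' := by
                have : s(x, y) ∈ u₁ := by rw [hfull₁]; exact he₁
                rw [hu₁] at this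
                exact (Finset.mem_inter.1 this).1
              have hdd := dedup he₁ he₂ hxyU
              linarith
            · have hm := margin_total (Or.inr hfull₂)
              have hrpos : (0 : ℝ) < 1 / ((r : ℝ) - 1) := by
                have : (3 : ℝ) ≤ (r : ℝ) := by exact_mod_cast hr
                exact one_div_pos.2 (by linarith)
              linarith
          · have hm := margin_total (Or.inl hfull₁)
            have hrpos : (0 : ℝ) < 1 / ((r : ℝ) - 1) := by
              have : (3 : ℝ) ≤ (r : ℝ) := by exact_mod_cast hr
              exact one_div_pos.2 (by linarith)
            linarith
      · -- x,y not joined in u₂ : no rank loss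
        have hkey := rkR_union_ge₂' (by rwa [Finset.inter_comm])
          hx2 hx1 hy2 hy1 hxy hreach₂
        apply noloss
        rw [hUu, Finset.union_comm]
        linarith
    · apply noloss
      rw [hUu]
      exact rkR_union_ge₂' hTcard hx1 hx2 hy1 hy2 hxy hreach₁

/-- Main bound for clean cycles of length `k ≥ 3` (dense case). -/
lemma main_k3 (hF : Strictly1Balanced F) (hr : 3 ≤ r) (hd1 : 1 < d1 F)
    {k : ℕ} (hk3 : 3 ≤ k) {h : Fin k → FEdge V}
    (hc : ∀ i, FEdge.IsCopyOf (h i) F)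
    {v : Fin k → V} (hinjv : Function.Injective v)
    (hcons : ∀ i j : Fin k, ((i : ℕ) + 1) % k = (j : ℕ) → (h i).1 ∩ (h j).1 = {v i})
    (hfar : ∀ i j : Fin k, i ≠ j → ((i : ℕ) + 1) % k ≠ (j : ℕ) →
      ((j : ℕ) + 1) % k ≠ (i : ℕ) → (h i).1 ∩ (h j).1 = ∅)
    {U' : Finset (Sym2 V)} (hU : ∀ e ∈ U', ∃ i, e ∈ (h i).2)
    (hnotall : ∃ j, U' ∩ (h j).2 ≠ (h j).2) :
    (U'.card : ℝ) < d1 F * (rkR U' + 1) := by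
  have hd0 : 0 ≤ d1 F := d1_nonneg hr
  have hdpos : 0 < d1 F := lt_trans one_pos hd1
  set d := d1 F with hd
  set u : Fin k → Finset (Sym2 V) := fun i => U' ∩ (h i).2 with hu
  -- master intersection description
  have hHH : ∀ a b : Fin k, (a : ℕ) < (b : ℕ) → (h a).1 ∩ (h b).1 =
      if (a : ℕ) + 1 = (b : ℕ) then {v a}
      else if (a : ℕ) = 0 ∧ (b : ℕ) = k - 1 then {v b} else ∅ := by
    intro a b hab
    by_cases h1 : (a : ℕ) + 1 = (b : ℕ)
    · rw [if_pos h1]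
      exact hcons a b (by rw [Nat.mod_eq_of_lt (h1 ▸ b.2)]; exact h1)
    · rw [if_neg h1]
      by_cases h2 : (a : ℕ) = 0 ∧ (b : ℕ) = k - 1
      · rw [if_pos h2]
        rw [Finset.inter_comm]
        apply hcons b a
        rw [h2.2, Nat.sub_add_cancel (by omega), Nat.mod_self]
        exact h2.1.symm
      · rw [if_neg h2]
        apply hfar a b
        · intro hc'
          exact absurd (congrArg Fin.val hc') (by omega)
        · intro hc'
          rcases Nat.lt_or_ge ((a : ℕ) + 1) k with hlt | hge
          · rw [Nat.mod_eq_of_lt hlt] at hc'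
            exact h1 hc'
          · have := b.2
            omega
        · intro hc'
          rcases Nat.lt_or_ge ((b : ℕ) + 1) k with hlt | hge
          · rw [Nat.mod_eq_of_lt hlt] at hc'
            omega
          · have hbk : (b : ℕ) = k - 1 := by have := b.2; omega
            have h0 : ((b : ℕ) + 1) % k = 0 := by
              rw [hbk, Nat.sub_add_cancel (by omega), Nat.mod_self]
            rw [h0] at hc'
            exact h2 ⟨hc'.symm, hbk⟩
  have hk1 : k - 1 < k := by omega
  have hk2 : k - 2 < k := by omega
  set lastI : Fin k := ⟨k - 1, hk1⟩ with hlastI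
  set prevI : Fin k := ⟨k - 2, hk2⟩ with hprevI
  set zeroI : Fin k := ⟨0, by omega⟩ with hzeroI
  have hlv : (lastI : ℕ) = k - 1 := rfl
  have hpv : (prevI : ℕ) = k - 2 := rfl
  have hzv : (zeroI : ℕ) = 0 := rfl
  set a0 : V := v prevI with ha0
  set b0 : V := v lastI with hb0
  have ha0b0 : a0 ≠ b0 := by
    intro hcon
    have := hinjv hcon
    have := congrArg Fin.val this
    omega
  -- memberships of overlap vertices
  have hmem_a0 : a0 ∈ (h prevI).1 ∧ a0 ∈ (h lastI).1 := by
    have hlt : (prevI : ℕ) < (lastI : ℕ) := by omega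
    have := hHH prevI lastI hlt
    rw [if_pos (by omega)] at this
    have hm : a0 ∈ (h prevI).1 ∩ (h lastI).1 := by
      rw [this]; simp [ha0]
    exact ⟨(Finset.mem_inter.1 hm).1, (Finset.mem_inter.1 hm).2⟩
  have hmem_b0 : b0 ∈ (h zeroI).1 ∧ b0 ∈ (h lastI).1 := by
    have hlt : (zeroI : ℕ) < (lastI : ℕ) := by omega
    have := hHH zeroI lastI hlt
    rw [if_neg (by omega), if_pos (by omega)] at this
    have hm : b0 ∈ (h zeroI).1 ∩ (h lastI).1 := by
      rw [this]; simp [hb0]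
    exact ⟨(Finset.mem_inter.1 hm).1, (Finset.mem_inter.1 hm).2⟩
  set P : Finset (Fin k) := Finset.univ.filter (fun i : Fin k => (i : ℕ) < k - 1) with hP
  set A : Finset (Sym2 V) := P.biUnion u with hA
  have hsupp : ∀ i, esupp (u i) ⊆ (h i).1 := fun i =>
    copy_supp_sub (hc i) Finset.inter_subset_right
  have hsplitset : (Finset.univ : Finset (Fin k)) = insert lastI P := by
    ext i
    simp only [Finset.mem_univ, true_iff, Finset.mem_insert, hP, Finset.mem_filter]
    by_cases hik : (i : ℕ) < k - 1
    · exact Or.inr ⟨trivial, hik⟩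
    · left
      apply Fin.ext
      have := i.2
      omega
  have hlastP : lastI ∉ P := by
    simp only [hP, Finset.mem_filter, Finset.mem_univ, true_and]
    omega
  have hUu : U' = Finset.univ.biUnion u := by
    ext e
    simp only [Finset.mem_biUnion, Finset.mem_univ, true_and, hu, Finset.mem_inter]
    constructor
    · intro he
      obtain ⟨i, hi⟩ := hU e he
      exact ⟨i, he, hi⟩
    · rintro ⟨i, he, _⟩
      exact he
  have hUA : U' = u lastI ∪ A := by
    rw [hUu, hsplitset, Finset.biUnion_insert]
  -- chain bound for the prefix
  have hchain : ∑ i ∈ P, rkR (u i) ≤ rkR A := by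
    apply chain_rkR u (fun i => (h i).1) hsupp (k - 1) (by omega)
    intro i hi
    refine ⟨v ⟨(i : ℕ) - 1, by omega⟩, ?_⟩
    intro a ha z hz
    have hlt : (a : ℕ) < (i : ℕ) := ha
    have := hHH a i hlt
    by_cases h1 : (a : ℕ) + 1 = (i : ℕ)
    · rw [if_pos h1] at this
      rw [this] at hz
      have hav : (a : ℕ) = (i : ℕ) - 1 := by omega
      have hai : a = ⟨(i : ℕ) - 1, by omega⟩ := Fin.ext hav
      rwa [← hai]
    · rw [if_neg h1, if_neg (by omega : ¬((a : ℕ) = 0 ∧ (i : ℕ) = k - 1))] at this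
      rw [this] at hz
      exact absurd hz (Finset.notMem_empty z)
  -- support of the prefix
  have hsupA : ∀ w, w ∈ esupp A → ∃ a : Fin k, (a : ℕ) < k - 1 ∧
      (u a).Nonempty ∧ w ∈ (h a).1 := by
    intro w hw
    obtain ⟨a, ha, hwa⟩ := Finset.mem_biUnion.1 (esupp_biUnion_sub P u hw)
    simp only [hP, Finset.mem_filter] at ha
    obtain ⟨e, he, _⟩ := mem_esupp.1 hwa
    exact ⟨a, ha.2, ⟨e, he⟩, hsupp a hwa⟩
  -- the overlap between prefix and last copy
  have hT : esupp A ∩ esupp (u lastI) ⊆ {a0, b0} := by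
    intro z hz
    obtain ⟨hz1, hz2⟩ := Finset.mem_inter.1 hz
    obtain ⟨a, halt, hane, hza⟩ := hsupA z hz1
    have hzl : z ∈ (h lastI).1 := hsupp lastI hz2
    have hlt : (a : ℕ) < (lastI : ℕ) := by omega
    have hint := hHH a lastI hlt
    have hzin : z ∈ (h a).1 ∩ (h lastI).1 := Finset.mem_inter.2 ⟨hza, hzl⟩
    rw [hint] at hzin
    by_cases h1 : (a : ℕ) + 1 = (lastI : ℕ)
    · rw [if_pos h1] at hzin
      have hai : a = prevI := by
        apply Fin.ext
        omega
      rw [Finset.mem_singleton] at hzin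
      rw [hzin, hai]
      simp [ha0]
    · rw [if_neg h1] at hzin
      by_cases h2 : (a : ℕ) = 0 ∧ (lastI : ℕ) = k - 1
      · rw [if_pos h2] at hzin
        rw [Finset.mem_singleton] at hzin
        rw [hzin]
        simp [hb0]
      · rw [if_neg h2] at hzin
        exact absurd hzin (Finset.notMem_empty z)
  have hTcard : (esupp A ∩ esupp (u lastI)).card ≤ 2 := by
    calc _ ≤ ({a0, b0} : Finset V).card := Finset.card_le_card hT
      _ ≤ 2 := Finset.card_insert_le _ _ |>.trans (by simp)
  -- global sums
  have hRi : ∀ i, ((u i).card : ℝ) ≤ d * rkR (u i) := fun i =>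
    copy_card_le hF hr (hc i) U'
  have hc_le : (U'.card : ℝ) ≤ ∑ i, ((u i).card : ℝ) := by
    have : U'.card ≤ ∑ i, (u i).card := by
      rw [hUu]
      exact Finset.card_biUnion_le
    exact_mod_cast this
  have hsum_split : ∑ i, rkR (u i) = rkR (u lastI) + ∑ i ∈ P, rkR (u i) := by
    rw [hsplitset, Finset.sum_insert hlastP]
  -- "no loss" wrap-up
  have noloss : (∑ i, rkR (u i)) ≤ rkR U' → (U'.card : ℝ) < d * (rkR U' + 1) := by
    intro hRU
    have hSC : ∑ i, ((u i).card : ℝ) ≤ d * ∑ i, rkR (u i) := by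
      rw [Finset.mul_sum]
      exact Finset.sum_le_sum fun i _ => hRi i
    have hmul : d * (∑ i, rkR (u i)) ≤ d * rkR U' :=
      mul_le_mul_of_nonneg_left hRU hd0
    linarith
  -- main case analysis
  by_cases hT1 : (esupp A ∩ esupp (u lastI)).card ≤ 1
  · apply noloss
    have hge := rkR_union_ge₁ (E₁ := u lastI) (E₂ := A) (by rwa [Finset.inter_comm])
    rw [← hUA] at hge
    linarith [hchain, hsum_split.le, hsum_split.ge, hge]
  · have hTeq : esupp A ∩ esupp (u lastI) = {a0, b0} := by
      apply Finset.eq_of_subset_of_card_le hT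
      rw [Finset.card_pair ha0b0]
      omega
    have ha0A : a0 ∈ esupp A :=
      (Finset.mem_inter.1 (hTeq ▸ (by simp : a0 ∈ ({a0, b0} : Finset V)))).1
    have ha0L : a0 ∈ esupp (u lastI) :=
      (Finset.mem_inter.1 (hTeq ▸ (by simp : a0 ∈ ({a0, b0} : Finset V)))).2
    have hb0A : b0 ∈ esupp A :=
      (Finset.mem_inter.1 (hTeq ▸ (by simp : b0 ∈ ({a0, b0} : Finset V)))).1
    have hb0L : b0 ∈ esupp (u lastI) :=
      (Finset.mem_inter.1 (hTeq ▸ (by simp : b0 ∈ ({a0, b0} : Finset V)))).2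
    by_cases hreachL : (gr (u lastI)).Reachable a0 b0
    · by_cases hreachA : (gr A).Reachable a0 b0
      · -- tight case: margin needed
        obtain ⟨j, hj⟩ := hnotall
        have hjne : (u j).Nonempty := by
          rw [Finset.nonempty_iff_ne_empty]
          intro hjemp
          -- derive a contradiction from emptiness of u j
          by_cases hjlast : j = lastI
          · rw [hjlast] at hjemp
            rw [hjemp] at hb0L
            simp at hb0L
          · have hjlt : (j : ℕ) < k - 1 := by
              have := j.2
              rcases Nat.lt_or_ge (j : ℕ) (k - 1) with hlt | hge
              · exact hlt
              · exact absurd (Fin.ext (by omega)) hjlast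
            by_cases hj0 : (j : ℕ) = 0
            · -- b0 cannot be in the support of A
              obtain ⟨a, halt, hane, hba⟩ := hsupA b0 hb0A
              have ha0' : (a : ℕ) ≠ 0 := by
                intro hcon
                apply Finset.nonempty_iff_ne_empty.1 hane
                have : a = j := Fin.ext (by omega)
                rwa [this]
              have hbz : b0 ∈ (h zeroI).1 ∩ (h a).1 :=
                Finset.mem_inter.2 ⟨hmem_b0.1, hba⟩
              have hint := hHH zeroI a (by omega)
              rw [hint] at hbz
              by_cases h1 : (zeroI : ℕ) + 1 = (a : ℕ)
              · rw [if_pos h1] at hbz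
                rw [Finset.mem_singleton] at hbz
                have h5 := congrArg Fin.val (hinjv hbz.symm)
                omega
              · rw [if_neg h1, if_neg (by omega)] at hbz
                exact absurd hbz (Finset.notMem_empty b0)
            · by_cases hjk2 : (j : ℕ) = k - 2
              · -- a0 cannot be in the support of A
                obtain ⟨a, halt, hane, haa⟩ := hsupA a0 ha0A
                have hak2 : (a : ℕ) ≠ k - 2 := by
                  intro hcon
                  apply Finset.nonempty_iff_ne_empty.1 hane
                  have : a = j := Fin.ext (by omega)
                  rwa [this]
                have hlt2 : (a : ℕ) < k - 2 := by omega
                have haz : a0 ∈ (h a).1 ∩ (h prevI).1 :=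
                  Finset.mem_inter.2 ⟨haa, hmem_a0.1⟩
                have hint := hHH a prevI (by omega)
                rw [hint] at haz
                by_cases h1 : (a : ℕ) + 1 = (prevI : ℕ)
                · rw [if_pos h1] at haz
                  rw [Finset.mem_singleton] at haz
                  have h5 := congrArg Fin.val (hinjv haz)
                  omega
                · rw [if_neg h1, if_neg (by omega)] at haz
                  exact absurd haz (Finset.notMem_empty a0)
              · -- middle cut: 0 < j < k-2
                set SA : Finset V := (Finset.univ.filter
                  (fun i : Fin k => (i : ℕ) < (j : ℕ))).biUnion (fun i => (h i).1) with hSA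
                set SB : Finset V := (Finset.univ.filter
                  (fun i : Fin k => (j : ℕ) < (i : ℕ) ∧ (i : ℕ) < k - 1)).biUnion
                    (fun i => (h i).1) with hSB
                have hdisjAB : ∀ z, ¬(z ∈ SA ∧ z ∈ SB) := by
                  rintro z ⟨hzA, hzB⟩
                  obtain ⟨a, ha, hza⟩ := Finset.mem_biUnion.1 hzA
                  obtain ⟨b, hb, hzb⟩ := Finset.mem_biUnion.1 hzB
                  simp only [Finset.mem_filter, Finset.mem_univ, true_and] at ha hb
                  have hint := hHH a b (by omega)
                  have hzm : z ∈ (h a).1 ∩ (h b).1 := Finset.mem_inter.2 ⟨hza, hzb⟩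
                  rw [hint, if_neg (by omega), if_neg (by omega)] at hzm
                  exact absurd hzm (Finset.notMem_empty z)
                have hEside : ∀ e ∈ A, (∀ z ∈ e, z ∈ SA) ∨ (∀ z ∈ e, z ∈ SB) := by
                  intro e he
                  obtain ⟨i, hiP, hei⟩ := Finset.mem_biUnion.1 he
                  simp only [hP, Finset.mem_filter, Finset.mem_univ, true_and] at hiP
                  have hij : i ≠ j := by
                    intro hcon
                    rw [hcon, hjemp] at hei
                    exact absurd hei (Finset.notMem_empty e)
                  have hie : ∀ z ∈ e, z ∈ (h i).1 := by
                    intro z hz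
                    exact copy_endpoints (hc i) e (Finset.inter_subset_right hei) z hz
                  by_cases hilt : (i : ℕ) < (j : ℕ)
                  · left
                    intro z hz
                    exact Finset.mem_biUnion.2 ⟨i,
                      by simp only [Finset.mem_filter, Finset.mem_univ, true_and]; exact hilt,
                      hie z hz⟩
                  · right
                    intro z hz
                    have hji : (j : ℕ) < (i : ℕ) := by
                      rcases Nat.lt_or_ge (j : ℕ) (i : ℕ) with hlt | hge
                      · exact hlt
                      · exact absurd (Fin.ext (by omega)) hij
                    exact Finset.mem_biUnion.2 ⟨i,
                      by simp only [Finset.mem_filter, Finset.mem_univ, true_and];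
                         exact ⟨hji, hiP⟩,
                      hie z hz⟩
                have hb0SA : b0 ∈ SA := by
                  exact Finset.mem_biUnion.2 ⟨zeroI,
                    by simp only [Finset.mem_filter, Finset.mem_univ, true_and]; omega,
                    hmem_b0.1⟩
                have ha0SB : a0 ∈ SB := by
                  exact Finset.mem_biUnion.2 ⟨prevI,
                    by simp only [Finset.mem_filter, Finset.mem_univ, true_and]; omega,
                    hmem_a0.1⟩
                have := reach_side hEside hdisjAB hb0SA hreachA.symm
                exact hdisjAB a0 ⟨this, ha0SB⟩
        -- margin wrap-up
        have hmargin := copy_card_margin hF hr (hc j) U' hjne hj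
        have hrpos : (0 : ℝ) < 1 / ((r : ℝ) - 1) := by
          have : (3 : ℝ) ≤ (r : ℝ) := by exact_mod_cast hr
          exact one_div_pos.2 (by linarith)
        have hge := rkR_union_ge₂ (E₁ := u lastI) (E₂ := A) (by rwa [Finset.inter_comm])
        rw [← hUA] at hge
        have hRU2 : (∑ i, rkR (u i)) - 1 ≤ rkR U' := by
          linarith [hchain, hsum_split.le]
        have hsplitC : ∑ i, ((u i).card : ℝ) =
            ((u j).card : ℝ) + ∑ i ∈ Finset.univ.erase j, ((u i).card : ℝ) :=
          (Finset.add_sum_erase _ _ (Finset.mem_univ j)).symm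
        have hsplitR : ∑ i, rkR (u i) =
            rkR (u j) + ∑ i ∈ Finset.univ.erase j, rkR (u i) :=
          (Finset.add_sum_erase _ _ (Finset.mem_univ j)).symm
        have herase : ∑ i ∈ Finset.univ.erase j, ((u i).card : ℝ) ≤
            d * ∑ i ∈ Finset.univ.erase j, rkR (u i) := by
          rw [Finset.mul_sum]
          exact Finset.sum_le_sum fun i _ => hRi i
        have hSC : ∑ i, ((u i).card : ℝ) ≤ d * (∑ i, rkR (u i)) - 1 / ((r : ℝ) - 1) := by
          rw [hsplitC, hsplitR, mul_add]
          linarith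
        have hmul : d * (∑ i, rkR (u i)) ≤ d * (rkR U' + 1) :=
          mul_le_mul_of_nonneg_left (by linarith) hd0
        linarith
      · apply noloss
        have hge := rkR_union_ge₂' (E₁ := A) (E₂ := u lastI)
          hTcard ha0A ha0L hb0A hb0L ha0b0 hreachA
        rw [Finset.union_comm, ← hUA] at hge
        linarith [hchain, hsum_split.le]
    · apply noloss
      have hge := rkR_union_ge₂' (E₁ := u lastI) (E₂ := A)
        (by rwa [Finset.inter_comm]) ha0L ha0A hb0L hb0A ha0b0 hreachL
      rw [← hUA] at hge
      linarith [hchain, hsum_split.le]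

end Vside

end DP


/-- Let `G` be the clean d-cycle corresponding to a clean `F`-cycle `C` of
length `k ≥ 2` (so `v(G) = k(r-1)` and `e(G) = k·e(F)`). Then every sub-d-graph `S` of `G`
on the full vertex set whose edge set is a proper subset of that of `G` satisfies
`e(S) < d₁(F)·(v(S) - c(S) + 1)`. -/
theorem dcycle_proper_sub_edge_bound {r : ℕ} (hr : 3 ≤ r) (F : SimpleGraph (Fin r))
    (hF : Strictly1Balanced F) {V : Type*} [DecidableEq V]
    (C : FGraph V) (k : ℕ) (hk : 2 ≤ k) (hC : IsCleanCycleOfLen F C k)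
    (G : DGraph V) (hG : IsCleanDCycleOf F G C)
    (U' : Finset (Sym2 V)) (D' : Finset (FGraph V))
    (hU : U' ⊆ G.2.1) (hD : D' ⊆ G.2.2)
    (hproper : U'.card + D'.card < G.2.1.card + G.2.2.card) :
    ((U'.card : ℝ) + (D'.card : ℝ))
      < d1 F * ((G.1.card : ℝ)
        - (Nat.card ((SimpleGraph.fromEdgeSet (↑U' : Set (Sym2 V))).induce
            (↑G.1 : Set V)).ConnectedComponent : ℝ) + 1) := by
  classical
  obtain ⟨hwf, hCv, hdis⟩ := hC
  have hd0 : 0 ≤ d1 F := DP.d1_nonneg hr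
  rcases hG with ⟨_, hnsp, hGe⟩ | ⟨hsp, hGe⟩
  · -- dense case
    have hG1 : G.1 = C.1 := by rw [hGe]
    have hG21 : G.2.1 = shadowEdges C := by rw [hGe]
    have hG22 : G.2.2 = (∅ : Finset (FGraph V)) := by rw [hGe]
    rw [hG21] at hU
    rw [hG22] at hD
    rw [hG21, hG22] at hproper
    rw [hG1]
    have hDcard : D'.card = 0 := by
      rw [Finset.subset_empty.1 hD]
      simp
    -- support inside the vertex set
    have hsupG : DP.esupp U' ⊆ C.1 := by
      intro z hz
      obtain ⟨e, he, hze⟩ := DP.mem_esupp.1 hz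
      have := hU he
      rw [shadowEdges, Finset.mem_sup] at this
      obtain ⟨hE, hmem, heE⟩ := this
      exact (hwf hE hmem).2 (DP.copy_endpoints (hwf hE hmem).1 e heE z hze)
    -- degenerate case : F has no edges
    by_cases hEFne : (DP.EF F).Nonempty
    swap
    · exfalso
      have hsh : shadowEdges C = ∅ := by
        rw [Finset.eq_empty_iff_forall_notMem]
        intro e he
        rw [shadowEdges, Finset.mem_sup] at he
        obtain ⟨hE, hmem, heE⟩ := he
        obtain ⟨φ, hinj, hv1, he2⟩ := DP.copy_basic (hwf hE hmem).1
        rw [he2, Finset.not_nonempty_iff_eq_empty.1 hEFne] at heE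
        simp at heE
      have hU0 : U' = ∅ := Finset.subset_empty.1 (hsh ▸ hU)
      rw [hU0, hsh] at hproper
      simp at hproper
    have hd1 : 1 < d1 F := DP.one_lt_d1 hF hr hEFne
    -- main inequality
    have hmain : (U'.card : ℝ) + (D'.card : ℝ) < d1 F * (DP.rkR U' + 1) := by
      rcases hdis with ⟨hk2, h₁, h₂, hne12, hC2, hover⟩ | ⟨hk3, h, hinjh, hC2, v, hinjv, hcons, hfar⟩
      · -- k = 2
        obtain ⟨x, y, hxy, hpair⟩ := Finset.card_eq_two.1 hover
        have hc₁ : FEdge.IsCopyOf h₁ F := (hwf h₁ (by rw [hC2]; simp)).1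
        have hc₂ : FEdge.IsCopyOf h₂ F := (hwf h₂ (by rw [hC2]; simp)).1
        have hshadow2 : shadowEdges C = h₁.2 ∪ h₂.2 := by
          rw [shadowEdges, hC2, Finset.sup_insert, Finset.sup_singleton,
            Finset.sup_eq_union]
        have hU2 : U' ⊆ h₁.2 ∪ h₂.2 := by rw [← hshadow2]; exact hU
        apply DP.main_k2 hF hr hd1 hc₁ hc₂ hxy hpair hU2 (by omega)
        · intro hcon
          omega
        · intro hf₁ hf₂
          exfalso
          have hUsh : U' = shadowEdges C := by
            apply Finset.Subset.antisymm hU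
            rw [hshadow2]
            intro e he
            rcases Finset.mem_union.1 he with he | he
            · rw [← hf₁] at he
              exact (Finset.mem_inter.1 he).1
            · rw [← hf₂] at he
              exact (Finset.mem_inter.1 he).1
          rw [hUsh] at hproper
          simp at hproper
      · -- k ≥ 3
        have hc : ∀ i, FEdge.IsCopyOf (h i) F := fun i =>
          (hwf (h i) (by rw [hC2]; exact Finset.mem_image_of_mem h (Finset.mem_univ i))).1
        have hU3 : ∀ e ∈ U', ∃ i, e ∈ (h i).2 := by
          intro e he
          have := hU he
          rw [shadowEdges, Finset.mem_sup] at this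
          obtain ⟨hE, hmem, heE⟩ := this
          rw [hC2] at hmem
          obtain ⟨i, _, rfl⟩ := Finset.mem_image.1 hmem
          exact ⟨i, heE⟩
        have hnotall : ∃ j, U' ∩ (h j).2 ≠ (h j).2 := by
          by_contra hcon
          push_neg at hcon
          have hUsh : U' = shadowEdges C := by
            apply Finset.Subset.antisymm hU
            intro e he
            rw [shadowEdges, Finset.mem_sup] at he
            obtain ⟨hE, hmem, heE⟩ := he
            rw [hC2] at hmem
            obtain ⟨i, _, rfl⟩ := Finset.mem_image.1 hmem
            have : e ∈ U' ∩ (h i).2 := by rw [hcon i]; exact heE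
            exact (Finset.mem_inter.1 this).1
          rw [hUsh] at hproper
          simp at hproper
        have h3 := DP.main_k3 hF hr hd1 hk3 hc hinjv hcons hfar hU3 hnotall
        have hD0 : (D'.card : ℝ) = 0 := by exact_mod_cast hDcard
        linarith
    -- bridge
    have hbr := DP.final_bridge (W := C.1) (U' := U') hsupG
    have hb2 : d1 F * (DP.rkR U' + 1) ≤ d1 F * ((C.1.card : ℝ)
        - (Nat.card ((SimpleGraph.fromEdgeSet (↑U' : Set (Sym2 V))).induce
          (↑C.1 : Set V)).ConnectedComponent : ℝ) + 1) :=
      mul_le_mul_of_nonneg_left (by linarith) hd0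
    linarith
  · -- sparse case
    obtain ⟨hlen2, h₁, h₂, hne12, hC2, x, y, hxy, hpair, he₁, he₂⟩ := hsp
    -- rule out k ≥ 3
    rcases hdis with ⟨hk2, _⟩ | ⟨hk3, h, hinjh, hC2', _⟩
    swap
    · exfalso
      have hcard1 : C.2.card = k := by
        rw [hC2', Finset.card_image_of_injective _ hinjh, Finset.card_univ,
          Fintype.card_fin]
      have hcard2 : C.2.card ≤ 2 := by
        rw [hC2]
        exact (Finset.card_insert_le _ _).trans (by simp)
      omega
    have hG1 : G.1 = C.1 := by rw [hGe]
    have hG21 : G.2.1 = shadowEdges C := by rw [hGe]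
    have hG22 : G.2.2 = ({C} : Finset (FGraph V)) := by rw [hGe]
    rw [hG21] at hU
    rw [hG22] at hD
    rw [hG21, hG22] at hproper
    rw [hG1]
    have hDcard : D'.card ≤ 1 := by
      calc D'.card ≤ ({C} : Finset (FGraph V)).card := Finset.card_le_card hD
        _ = 1 := Finset.card_singleton C
    have hc₁ : FEdge.IsCopyOf h₁ F := (hwf h₁ (by rw [hC2]; simp)).1
    have hc₂ : FEdge.IsCopyOf h₂ F := (hwf h₂ (by rw [hC2]; simp)).1
    have hEFne : (DP.EF F).Nonempty := by
      obtain ⟨φ, hinj, hv1, he2⟩ := DP.copy_basic hc₁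
      rw [he2] at he₁
      obtain ⟨e₀, he₀, _⟩ := Finset.mem_image.1 he₁
      exact ⟨e₀, he₀⟩
    have hd1 : 1 < d1 F := DP.one_lt_d1 hF hr hEFne
    have hsupG : DP.esupp U' ⊆ C.1 := by
      intro z hz
      obtain ⟨e, he, hze⟩ := DP.mem_esupp.1 hz
      have := hU he
      rw [shadowEdges, Finset.mem_sup] at this
      obtain ⟨hE, hmem, heE⟩ := this
      exact (hwf hE hmem).2 (DP.copy_endpoints (hwf hE hmem).1 e heE z hze)
    have hshadow2 : shadowEdges C = h₁.2 ∪ h₂.2 := by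
      rw [shadowEdges, hC2, Finset.sup_insert, Finset.sup_singleton,
        Finset.sup_eq_union]
    have hU2 : U' ⊆ h₁.2 ∪ h₂.2 := by rw [← hshadow2]; exact hU
    have hmain : (U'.card : ℝ) + (D'.card : ℝ) < d1 F * (DP.rkR U' + 1) := by
      apply DP.main_k2 hF hr hd1 hc₁ hc₂ hxy hpair hU2 hDcard
      · intro _
        exact ⟨he₁, he₂⟩
      · intro hf₁ hf₂
        refine ⟨?_, he₁, he₂⟩
        have hUsh : U' = shadowEdges C := by
          apply Finset.Subset.antisymm hU
          rw [hshadow2]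
          intro e he
          rcases Finset.mem_union.1 he with he | he
          · rw [← hf₁] at he
            exact (Finset.mem_inter.1 he).1
          · rw [← hf₂] at he
            exact (Finset.mem_inter.1 he).1
        rw [hUsh] at hproper
        simp only [Finset.card_singleton] at hproper
        omega
    have hbr := DP.final_bridge (W := C.1) (U' := U') hsupG
    have hb2 : d1 F * (DP.rkR U' + 1) ≤ d1 F * ((C.1.card : ℝ)
        - (Nat.card ((SimpleGraph.fromEdgeSet (↑U' : Set (Sym2 V))).induce
          (↑C.1 : Set V)).ConnectedComponent : ℝ) + 1) :=
      mul_le_mul_of_nonneg_left (by linarith) hd0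
    linarith


end
end

section
/- Let F be a graph on r vertices, let H_1 and H_2 be connected F-graphs, and let v be a common vertex of H_1 and H_2 such that no F-edge incident to v belongs to both H_1 and H_2. Let H_2' be the F-graph obtained from H_2 by replacing v with an entirely new vertex not occurring in H_1 or H_2. Then n(H_1 ∪ H_2') = n(H_1 ∪ H_2) if v is the only common vertex of H_1 and H_2, and n(H_1 ∪ H_2') = n(H_1 ∪ H_2) − 1 if H_1 and H_2 have at least two common vertices. -/
open scoped Classical
open Filter Asymptotics

noncomputable section

/-! Auxiliary lemmas -/


lemma FEdge.mem_of_mem_edge {r : ℕ} {V : Type*} {F : SimpleGraph (Fin r)} {h : FEdge V}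
    (hc : h.IsCopyOf F) {e : Sym2 V} (he : e ∈ h.2) {x : V} (hx : x ∈ e) : x ∈ h.1 := by
  obtain ⟨φ, hφ, h1, h2⟩ := hc
  have he' : e ∈ (↑h.2 : Set (Sym2 V)) := he
  rw [h2] at he'
  obtain ⟨e₀, _, rfl⟩ := he'
  obtain ⟨y, _, rfl⟩ := Sym2.mem_map.mp hx
  have : φ y ∈ (↑h.1 : Set V) := by rw [h1]; exact Set.mem_range_self y
  exact this

lemma mem_of_mem_shadowEdges {r : ℕ} {V : Type*} [DecidableEq V] {F : SimpleGraph (Fin r)}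
    {H : FGraph V} (hwf : FGraph.Wf H F) {e : Sym2 V} (he : e ∈ shadowEdges H)
    {x : V} (hx : x ∈ e) : x ∈ H.1 := by
  obtain ⟨h, hh, he'⟩ := Finset.mem_sup.mp he
  exact (hwf h hh).2 (FEdge.mem_of_mem_edge (hwf h hh).1 he' hx)

lemma FEdge.isCopyOf_map {r : ℕ} {V : Type*} [DecidableEq V] {F : SimpleGraph (Fin r)}
    {h : FEdge V} (hc : h.IsCopyOf F) {ρ : V → V} (hinj : Set.InjOn ρ ↑h.1) :
    (FEdge.map ρ h).IsCopyOf F := by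
  obtain ⟨φ, hφ, h1, h2⟩ := hc
  refine ⟨ρ ∘ φ, ?_, ?_, ?_⟩
  · intro a b hab
    have ha : φ a ∈ (↑h.1 : Set V) := by rw [h1]; exact Set.mem_range_self a
    have hb : φ b ∈ (↑h.1 : Set V) := by rw [h1]; exact Set.mem_range_self b
    exact hφ (hinj ha hb hab)
  · show ((h.1.image ρ : Finset V) : Set V) = _
    rw [Finset.coe_image, h1, Set.range_comp]
  · show ((h.2.image (Sym2.map ρ) : Finset (Sym2 V)) : Set (Sym2 V)) = _
    rw [Finset.coe_image, h2, ← Set.image_comp]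
    exact Set.image_congr (fun e _ => Sym2.map_map e)

lemma FEdge.map_eq_self {r : ℕ} {V : Type*} [DecidableEq V] {F : SimpleGraph (Fin r)}
    {h : FEdge V} (hc : h.IsCopyOf F) {ρ : V → V} (hfix : ∀ x ∈ h.1, ρ x = x) :
    FEdge.map ρ h = h := by
  unfold FEdge.map
  refine Prod.ext ?_ ?_
  · show h.1.image ρ = h.1
    rw [Finset.image_congr (g := id) (fun x hx => hfix x hx), Finset.image_id]
  · show h.2.image (Sym2.map ρ) = h.2
    rw [Finset.image_congr (g := id) ?_, Finset.image_id]
    intro e he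
    induction e with
    | h a b =>
      rw [Sym2.map_pair_eq, id_eq,
        hfix a (FEdge.mem_of_mem_edge hc he (Sym2.mem_mk_left a b)),
        hfix b (FEdge.mem_of_mem_edge hc he (Sym2.mem_mk_right a b))]

lemma wf_map {r : ℕ} {V : Type*} [DecidableEq V] {F : SimpleGraph (Fin r)} {H : FGraph V}
    (hwf : FGraph.Wf H F) {ρ : V → V} (hinj : Set.InjOn ρ ↑H.1) :
    FGraph.Wf (FGraph.map ρ H) F := by
  rintro h hh
  obtain ⟨g, hg, rfl⟩ := Finset.mem_image.mp hh
  obtain ⟨hcopy, hsub⟩ := hwf g hg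
  exact ⟨FEdge.isCopyOf_map hcopy (hinj.mono (Finset.coe_subset.mpr hsub)),
    Finset.image_subset_image hsub⟩

lemma shadowEdges_union {V : Type*} [DecidableEq V] (H K : FGraph V) :
    shadowEdges (FGraph.union H K) = shadowEdges H ∪ shadowEdges K :=
  Finset.sup_union

lemma shadowEdges_map {V : Type*} [DecidableEq V] (ρ : V → V) (H : FGraph V) :
    shadowEdges (FGraph.map ρ H) = (shadowEdges H).image (Sym2.map ρ) := by
  unfold shadowEdges FGraph.map
  rw [Finset.sup_image]
  induction H.2 using Finset.induction_on with
  | empty => simp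
  | insert h s _ ih => simp [Finset.sup_insert, Finset.image_union, ih, FEdge.map, Function.comp]

lemma card_cc_one {V : Type*} {G : SimpleGraph V} (h : G.Connected) :
    Nat.card G.ConnectedComponent = 1 := by
  rw [Nat.card_eq_one_iff_unique]
  constructor
  · constructor
    intro a b
    obtain ⟨x, rfl⟩ := Quot.exists_rep a
    obtain ⟨y, rfl⟩ := Quot.exists_rep b
    exact SimpleGraph.ConnectedComponent.sound (h.preconnected x y)
  · exact ⟨G.connectedComponentMk h.nonempty.some⟩

lemma connected_union_induce {V : Type*} {G₁ G₂ K : SimpleGraph V} {s t : Set V}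
    (h₁ : G₁ ≤ K) (h₂ : G₂ ≤ K)
    (hc₁ : (G₁.induce s).Connected) (hc₂ : (G₂.induce t).Connected)
    {c : V} (hcs : c ∈ s) (hct : c ∈ t) : (K.induce (s ∪ t)).Connected := by
  let f₁ : G₁.induce s →g K.induce (s ∪ t) :=
    SimpleGraph.induceHom (SimpleGraph.Hom.ofLE h₁) (fun x hx => Or.inl hx)
  let f₂ : G₂.induce t →g K.induce (s ∪ t) :=
    SimpleGraph.induceHom (SimpleGraph.Hom.ofLE h₂) (fun x hx => Or.inr hx)
  have key : ∀ x : ↑(s ∪ t), (K.induce (s ∪ t)).Reachable x ⟨c, Or.inl hcs⟩ := by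
    rintro ⟨x, hx | hx⟩
    · exact (hc₁.preconnected ⟨x, hx⟩ ⟨c, hcs⟩).map f₁
    · exact (hc₂.preconnected ⟨x, hx⟩ ⟨c, hct⟩).map f₂
  rw [SimpleGraph.connected_iff]
  exact ⟨fun a b => (key a).trans (key b).symm, ⟨⟨c, Or.inl hcs⟩⟩⟩

lemma connected_map {r : ℕ} {V : Type*} [DecidableEq V] {F : SimpleGraph (Fin r)}
    {H : FGraph V} (hwf : FGraph.Wf H F) (hc : FGraphConnected H) {ρ : V → V}
    (hinj : Set.InjOn ρ ↑H.1) : FGraphConnected (FGraph.map ρ H) := by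
  have hmem : ∀ x ∈ H.1, ρ x ∈ (FGraph.map ρ H).1 := fun x hx => Finset.mem_image_of_mem ρ hx
  have hc' : ((shadow H).induce (↑H.1 : Set V)).Connected := hc
  let f : (shadow H).induce (↑H.1 : Set V) →g
      (shadow (FGraph.map ρ H)).induce (↑(FGraph.map ρ H).1 : Set V) := by
    refine ⟨fun x => ⟨ρ x.1, hmem x.1 x.2⟩, ?_⟩
    rintro ⟨x, hx⟩ ⟨y, hy⟩ hxy
    obtain ⟨he, hne⟩ := (SimpleGraph.fromEdgeSet_adj _).mp hxy
    refine (SimpleGraph.fromEdgeSet_adj _).mpr ⟨?_, fun hcon => hne (hinj hx hy hcon)⟩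
    rw [shadowEdges_map]
    exact Finset.mem_coe.mpr (Finset.mem_image.mpr ⟨s(x, y), Finset.mem_coe.mp he, rfl⟩)
  show ((shadow (FGraph.map ρ H)).induce (↑(FGraph.map ρ H).1 : Set V)).Connected
  rw [SimpleGraph.connected_iff]
  constructor
  · rintro ⟨a, ha⟩ ⟨b, hb⟩
    obtain ⟨x, hx, hxa⟩ := Finset.mem_image.mp ha
    obtain ⟨y, hy, hyb⟩ := Finset.mem_image.mp hb
    have h1 : f ⟨x, hx⟩ = ⟨a, ha⟩ := Subtype.ext hxa
    have h2 : f ⟨y, hy⟩ = ⟨b, hb⟩ := Subtype.ext hyb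
    rw [← h1, ← h2]
    exact (hc'.preconnected ⟨x, hx⟩ ⟨y, hy⟩).map f
  · obtain ⟨x⟩ := hc'.nonempty
    exact ⟨⟨ρ x.1, hmem x.1 x.2⟩⟩

lemma card_cc_two {V : Type*} {K : SimpleGraph V} {s t : Set V}
    (hdis : ∀ x, ¬(x ∈ s ∧ x ∈ t))
    (hedge : ∀ x y : V, K.Adj x y → (x ∈ s ∧ y ∈ s) ∨ (x ∈ t ∧ y ∈ t))
    (hs : (K.induce s).Connected) (ht : (K.induce t).Connected) :
    Nat.card (K.induce (s ∪ t)).ConnectedComponent = 2 := by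
  classical
  set G := K.induce (s ∪ t) with hG
  have hstep : ∀ a b : ↑(s ∪ t), G.Adj a b → ((a : V) ∈ s ↔ (b : V) ∈ s) := by
    intro a b hab
    rcases hedge a b hab with ⟨ha, hb⟩ | ⟨ha, hb⟩
    · simp [ha, hb]
    · exact ⟨fun h => (hdis a ⟨h, ha⟩).elim, fun h => (hdis b ⟨h, hb⟩).elim⟩
  have hconst : ∀ (a b : ↑(s ∪ t)) (p : G.Walk a b),
      (decide ((a : V) ∈ s)) = (decide ((b : V) ∈ s)) := by
    intro a b p
    induction p with
    | nil => rfl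
    | cons h _ ih => exact (decide_eq_decide.mpr (hstep _ _ h)).trans ih
  let f : G.ConnectedComponent → Bool :=
    SimpleGraph.ConnectedComponent.lift (fun a => decide ((a : V) ∈ s))
      (fun a b p _ => hconst a b p)
  have hreach : ∀ (u : Set V), (K.induce u).Connected → ∀ (husub : u ⊆ s ∪ t)
      (a b : ↑(s ∪ t)), (a : V) ∈ u → (b : V) ∈ u → G.Reachable a b := by
    intro u hu husub a b ha hb
    let fu : K.induce u →g G :=
      SimpleGraph.induceHom SimpleGraph.Hom.id (fun x hx => husub hx)
    exact (hu.preconnected ⟨a, ha⟩ ⟨b, hb⟩).map fu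
  have hbij : Function.Bijective f := by
    constructor
    · intro a b hab
      obtain ⟨x, rfl⟩ := Quot.exists_rep a
      obtain ⟨y, rfl⟩ := Quot.exists_rep b
      have hd : decide ((x : V) ∈ s) = decide ((y : V) ∈ s) := hab
      by_cases hx : (x : V) ∈ s
      · have hy : (y : V) ∈ s := by simpa [hx] using hd.symm
        exact SimpleGraph.ConnectedComponent.sound
          (hreach s hs Set.subset_union_left x y hx hy)
      · have hx' : (x : V) ∈ t := x.2.resolve_left hx
        have hy : (y : V) ∉ s := by simpa [hx] using hd.symm
        have hy' : (y : V) ∈ t := y.2.resolve_left hy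
        exact SimpleGraph.ConnectedComponent.sound
          (hreach t ht Set.subset_union_right x y hx' hy')
    · intro bo
      obtain ⟨a⟩ := hs.nonempty
      obtain ⟨b⟩ := ht.nonempty
      cases bo
      · refine ⟨G.connectedComponentMk ⟨b.1, Or.inr b.2⟩, ?_⟩
        have hb : (b : V) ∉ s := fun h => hdis b ⟨h, b.2⟩
        simp [f, SimpleGraph.ConnectedComponent.lift_mk, hb]
      · refine ⟨G.connectedComponentMk ⟨a.1, Or.inl a.2⟩, ?_⟩
        simp [f, SimpleGraph.ConnectedComponent.lift_mk, a.2]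
  rw [Nat.card_eq_of_bijective f hbij]
  simp

/-- Let `H₁, H₂` be connected `F`-graphs and `v` a common vertex such that
no `F`-edge incident to `v` belongs to both. Replacing `v` in `H₂` by a fresh vertex `w`
leaves the nullity of the union unchanged if `v` is the only common vertex, and decreases
it by one if there are at least two common vertices. -/
theorem nullity_split_vertex {r : ℕ} (F : SimpleGraph (Fin r)) {V : Type*} [DecidableEq V]
    (H₁ H₂ : FGraph V) (hw₁ : FGraph.Wf H₁ F) (hw₂ : FGraph.Wf H₂ F)
    (hc₁ : FGraphConnected H₁) (hc₂ : FGraphConnected H₂)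
    (v : V) (hv : v ∈ H₁.1 ∩ H₂.1)
    (hno : ∀ h ∈ H₁.2 ∩ H₂.2, v ∉ h.1)
    (w : V) (hw : w ∉ H₁.1 ∪ H₂.1)
    (ρ : V → V) (hρv : ρ v = w) (hρ : ∀ x, x ≠ v → ρ x = x) :
    (H₁.1 ∩ H₂.1 = {v} →
      nullity r (FGraph.union H₁ (FGraph.map ρ H₂)) = nullity r (FGraph.union H₁ H₂)) ∧
    (2 ≤ (H₁.1 ∩ H₂.1).card →
      nullity r (FGraph.union H₁ (FGraph.map ρ H₂))
        = nullity r (FGraph.union H₁ H₂) - 1) := by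
  obtain ⟨hv1, hv2⟩ := Finset.mem_inter.mp hv
  -- injectivity of ρ
  have hinjU : Set.InjOn ρ ↑(H₁.1 ∪ H₂.1) := by
    intro x hx y hy hxy
    by_cases hxv : x = v
    · by_cases hyv : y = v
      · rw [hxv, hyv]
      · rw [hxv, hρv, hρ y hyv] at hxy
        rw [← hxy] at hy
        exact absurd hy hw
    · by_cases hyv : y = v
      · rw [hyv, hρv, hρ x hxv] at hxy
        rw [hxy] at hx
        exact absurd hx hw
      · rwa [hρ x hxv, hρ y hyv] at hxy
  have hinjB : Set.InjOn ρ ↑H₂.1 :=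
    hinjU.mono (Finset.coe_subset.mpr Finset.subset_union_right)
  -- the inverse map τ
  set τ : V → V := fun x => if x = w then v else x with hτ
  have hτρ : ∀ x ∈ H₂.1, τ (ρ x) = x := by
    intro x hx
    by_cases hxv : x = v
    · subst hxv; rw [hρv]; simp [hτ]
    · rw [hρ x hxv]
      have hxw : x ≠ w := fun h => hw (Finset.mem_union_right _ (h ▸ hx))
      simp [hτ, hxw]
  have hmapinv : ∀ g ∈ H₂.2, FEdge.map τ (FEdge.map ρ g) = g := by
    intro g hg
    have hcomp : FEdge.map τ (FEdge.map ρ g) = FEdge.map (τ ∘ ρ) g := by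
      unfold FEdge.map
      refine Prod.ext ?_ ?_
      · exact Finset.image_image
      · show (g.2.image (Sym2.map ρ)).image (Sym2.map τ) = g.2.image (Sym2.map (τ ∘ ρ))
        rw [Finset.image_image]
        exact Finset.image_congr (fun e _ => Sym2.map_map e)
    rw [hcomp]
    exact FEdge.map_eq_self (hw₂ g hg).1 (fun x hx => hτρ x ((hw₂ g hg).2 hx))
  have hinjE : Set.InjOn (FEdge.map ρ) ↑H₂.2 := by
    intro g₁ h1 g₂ h2 he
    rw [← hmapinv g₁ h1, ← hmapinv g₂ h2, he]
  -- edge intersection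
  have hEint : H₁.2 ∩ (H₂.2.image (FEdge.map ρ)) = H₁.2 ∩ H₂.2 := by
    ext h
    simp only [Finset.mem_inter, Finset.mem_image]
    constructor
    · rintro ⟨h1, g, hg, rfl⟩
      have hvg : v ∉ g.1 := by
        intro hvg
        have hwg : w ∈ (FEdge.map ρ g).1 := Finset.mem_image.mpr ⟨v, hvg, hρv⟩
        exact hw (Finset.mem_union_left _ ((hw₁ _ h1).2 hwg))
      have heq : FEdge.map ρ g = g :=
        FEdge.map_eq_self (hw₂ g hg).1
          (fun x hx => hρ x (fun hxv => hvg (hxv ▸ hx)))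
      rw [heq] at h1 ⊢
      exact ⟨h1, hg⟩
    · rintro ⟨h1, h2⟩
      refine ⟨h1, h, h2, FEdge.map_eq_self (hw₂ h h2).1 ?_⟩
      intro x hx
      exact hρ x (fun hxv => hno h (Finset.mem_inter.mpr ⟨h1, h2⟩) (hxv ▸ hx))
  -- vertex intersection
  have hAB' : H₁.1 ∩ H₂.1.image ρ = (H₁.1 ∩ H₂.1).erase v := by
    ext x
    simp only [Finset.mem_inter, Finset.mem_image, Finset.mem_erase]
    constructor
    · rintro ⟨hx1, y, hy, rfl⟩
      have hyv : y ≠ v := by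
        intro h
        rw [h, hρv] at hx1
        exact hw (Finset.mem_union_left _ hx1)
      rw [hρ y hyv] at hx1 ⊢
      exact ⟨hyv, hx1, hy⟩
    · rintro ⟨hxv, hx1, hx2⟩
      exact ⟨hx1, x, hx2, hρ x hxv⟩
  have hcardB' : (H₂.1.image ρ).card = H₂.1.card := Finset.card_image_of_injOn hinjB
  have hcardE' : (H₂.2.image (FEdge.map ρ)).card = H₂.2.card :=
    Finset.card_image_of_injOn hinjE
  have hVc : (H₁.1 ∪ H₂.1.image ρ).card = (H₁.1 ∪ H₂.1).card + 1 := by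
    have k1 := Finset.card_union_add_card_inter H₁.1 (H₂.1.image ρ)
    have k2 := Finset.card_union_add_card_inter H₁.1 H₂.1
    rw [hAB', Finset.card_erase_of_mem hv, hcardB'] at k1
    have hpos : 1 ≤ (H₁.1 ∩ H₂.1).card := Finset.card_pos.mpr ⟨v, hv⟩
    omega
  have hEc : (H₁.2 ∪ H₂.2.image (FEdge.map ρ)).card = (H₁.2 ∪ H₂.2).card := by
    have k1 := Finset.card_union_add_card_inter H₁.2 (H₂.2.image (FEdge.map ρ))
    have k2 := Finset.card_union_add_card_inter H₁.2 H₂.2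
    rw [hEint, hcardE'] at k1
    omega
  -- shadow inclusions
  have hle₁ : ∀ X Y : FGraph V, shadow X ≤ shadow (FGraph.union X Y) := fun X Y =>
    SimpleGraph.fromEdgeSet_mono (by
      rw [shadowEdges_union]; exact Finset.coe_subset.mpr Finset.subset_union_left)
  have hle₂ : ∀ X Y : FGraph V, shadow Y ≤ shadow (FGraph.union X Y) := fun X Y =>
    SimpleGraph.fromEdgeSet_mono (by
      rw [shadowEdges_union]; exact Finset.coe_subset.mpr Finset.subset_union_right)
  have hc₂' : FGraphConnected (FGraph.map ρ H₂) := connected_map hw₂ hc₂ hinjB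
  have hwmap : FGraph.Wf (FGraph.map ρ H₂) F := wf_map hw₂ hinjB
  -- component count of the ordinary union
  have hC : compCount (FGraph.union H₁ H₂) = 1 := by
    have hcon : ((shadow (FGraph.union H₁ H₂)).induce
        ((↑H₁.1 : Set V) ∪ (↑H₂.1 : Set V))).Connected :=
      connected_union_induce (hle₁ H₁ H₂) (hle₂ H₁ H₂) hc₁ hc₂ hv1 hv2
    unfold compCount
    rw [show ((FGraph.union H₁ H₂).1 : Set V) = (↑H₁.1 : Set V) ∪ (↑H₂.1 : Set V) from
      Finset.coe_union _ _]
    exact card_cc_one hcon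
  refine ⟨fun hsingle => ?_, fun hcard => ?_⟩
  · -- exactly one common vertex: the new union has two components
    have hC2 : compCount (FGraph.union H₁ (FGraph.map ρ H₂)) = 2 := by
      have hdis : ∀ x : V, ¬(x ∈ (↑H₁.1 : Set V) ∧ x ∈ (↑(FGraph.map ρ H₂).1 : Set V)) := by
        rintro x ⟨hx1, hx2⟩
        have hmem : x ∈ H₁.1 ∩ H₂.1.image ρ := Finset.mem_inter.mpr ⟨hx1, hx2⟩
        rw [hAB', hsingle, Finset.erase_singleton] at hmem
        exact absurd hmem (Finset.notMem_empty x)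
      have hedge : ∀ x y : V, (shadow (FGraph.union H₁ (FGraph.map ρ H₂))).Adj x y →
          (x ∈ (↑H₁.1 : Set V) ∧ y ∈ (↑H₁.1 : Set V)) ∨
          (x ∈ (↑(FGraph.map ρ H₂).1 : Set V) ∧ y ∈ (↑(FGraph.map ρ H₂).1 : Set V)) := by
        intro x y hxy
        obtain ⟨he, -⟩ := (SimpleGraph.fromEdgeSet_adj _).mp hxy
        have he' : s(x, y) ∈ shadowEdges H₁ ∪ shadowEdges (FGraph.map ρ H₂) := by
          rw [← shadowEdges_union]; exact he
        rcases Finset.mem_union.mp he' with h | h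
        · exact Or.inl ⟨mem_of_mem_shadowEdges hw₁ h (Sym2.mem_mk_left x y),
            mem_of_mem_shadowEdges hw₁ h (Sym2.mem_mk_right x y)⟩
        · exact Or.inr ⟨mem_of_mem_shadowEdges hwmap h (Sym2.mem_mk_left x y),
            mem_of_mem_shadowEdges hwmap h (Sym2.mem_mk_right x y)⟩
      have hs' : ((shadow (FGraph.union H₁ (FGraph.map ρ H₂))).induce
          (↑H₁.1 : Set V)).Connected :=
        hc₁.mono (fun a b hab => hle₁ H₁ (FGraph.map ρ H₂) hab)
      have ht' : ((shadow (FGraph.union H₁ (FGraph.map ρ H₂))).induce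
          (↑(FGraph.map ρ H₂).1 : Set V)).Connected :=
        hc₂'.mono (fun a b hab => hle₂ H₁ (FGraph.map ρ H₂) hab)
      unfold compCount
      rw [show ((FGraph.union H₁ (FGraph.map ρ H₂)).1 : Set V) =
        (↑H₁.1 : Set V) ∪ (↑(FGraph.map ρ H₂).1 : Set V) from Finset.coe_union _ _]
      exact card_cc_two hdis hedge hs' ht'
    unfold nullity
    rw [hC, hC2]
    show ((r : ℤ) - 1) * ((H₁.2 ∪ H₂.2.image (FEdge.map ρ)).card : ℤ) + (2 : ℕ)
        - ((H₁.1 ∪ H₂.1.image ρ).card : ℤ)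
      = ((r : ℤ) - 1) * ((H₁.2 ∪ H₂.2).card : ℤ) + (1 : ℕ) - ((H₁.1 ∪ H₂.1).card : ℤ)
    rw [hEc, hVc]
    push_cast
    ring
  · -- at least two common vertices: both unions are connected
    obtain ⟨u, hu, huv⟩ := Finset.exists_mem_ne (s := H₁.1 ∩ H₂.1) (by omega) v
    obtain ⟨hu1, hu2⟩ := Finset.mem_inter.mp hu
    have hu2' : u ∈ (FGraph.map ρ H₂).1 := Finset.mem_image.mpr ⟨u, hu2, hρ u huv⟩
    have hC1 : compCount (FGraph.union H₁ (FGraph.map ρ H₂)) = 1 := by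
      have hcon : ((shadow (FGraph.union H₁ (FGraph.map ρ H₂))).induce
          ((↑H₁.1 : Set V) ∪ (↑(FGraph.map ρ H₂).1 : Set V))).Connected :=
        connected_union_induce (hle₁ H₁ (FGraph.map ρ H₂)) (hle₂ H₁ (FGraph.map ρ H₂))
          hc₁ hc₂' hu1 hu2'
      unfold compCount
      rw [show ((FGraph.union H₁ (FGraph.map ρ H₂)).1 : Set V) =
        (↑H₁.1 : Set V) ∪ (↑(FGraph.map ρ H₂).1 : Set V) from Finset.coe_union _ _]
      exact card_cc_one hcon
    unfold nullity
    rw [hC, hC1]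
    show ((r : ℤ) - 1) * ((H₁.2 ∪ H₂.2.image (FEdge.map ρ)).card : ℤ) + (1 : ℕ)
        - ((H₁.1 ∪ H₂.1.image ρ).card : ℤ)
      = ((r : ℤ) - 1) * ((H₁.2 ∪ H₂.2).card : ℤ) + (1 : ℕ) - ((H₁.1 ∪ H₂.1).card : ℤ) - 1
    rw [hEc, hVc]
    push_cast
    ring

end
end
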